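/- arXiv:1904.11668 — 3 statements merged into one kernel-verified Lean document; each statement's English description precedes it below -/
import Mathlib

section
/- Let (M, 𝒜) be an uncertainty matroid on a finite ground set E, let X ⊆ E be a feasible query, and let e ∈ X be colored. Then X − e is a feasible query. Consequently, every feasible query that is minimal with respect to inclusion consists only of elements that are uncertain and uncolored. -/
open Matroid

variable {α : Type*}

/-- `A` is an uncertainty area function for `M`: each element of the ground set gets a
nonempty bounded set of reals. -/
def IsAreaFun (M : Matroid α) (A : α → Set ℝ) : Prop :=
  ∀ e ∈ M.E, (A e).Nonempty ∧ BddBelow (A e) ∧ BddAbove (A e)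

/-- A realization: a weight function with `w e ∈ A e` for every element of the ground set. -/
def Realization (M : Matroid α) (A : α → Set ℝ) (w : α → ℝ) : Prop :=
  ∀ e ∈ M.E, w e ∈ A e

/-- The total `w`-weight of a set. -/
noncomputable def setWeight (w : α → ℝ) (T : Set α) : ℝ := ∑ᶠ e ∈ T, w e

/-- A `w`-basis: a basis of `M` of minimum total `w`-weight. -/
def IsMinBasis (M : Matroid α) (w : α → ℝ) (T : Set α) : Prop :=
  M.IsBase T ∧ ∀ B, M.IsBase B → setWeight w T ≤ setWeight w B

/-- A uniformly optimal basis (an `A`-basis): a `w`-basis for every realization `w`. -/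
def IsUOB (M : Matroid α) (A : α → Set ℝ) (T : Set α) : Prop :=
  ∀ w, Realization M A w → IsMinBasis M w T

/-- An element is certain if its area is a singleton. -/
def Certain (A : α → Set ℝ) (e : α) : Prop := ∃ r : ℝ, A e = {r}

/-- `e` is blue if every realization admits a minimum weight basis containing `e`. -/
def Blue (M : Matroid α) (A : α → Set ℝ) (e : α) : Prop :=
  ∀ w, Realization M A w → ∃ T, IsMinBasis M w T ∧ e ∈ T

/-- `e` is red if every realization admits a minimum weight basis avoiding `e`. -/
def Red (M : Matroid α) (A : α → Set ℝ) (e : α) : Prop :=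
  ∀ w, Realization M A w → ∃ T, IsMinBasis M w T ∧ e ∉ T

/-- `e` is colored if it is blue or red. -/
def Colored (M : Matroid α) (A : α → Set ℝ) (e : α) : Prop :=
  Blue M A e ∨ Red M A e

/-- `B` is a revelation of `X` in `(M, A)`: on `X` each area is replaced by a singleton
subset of itself, and outside `X` areas are unchanged. -/
def IsRevelation (M : Matroid α) (A : α → Set ℝ) (X : Set α) (B : α → Set ℝ) : Prop :=
  (∀ e ∈ X, ∃ r ∈ A e, B e = {r}) ∧ ∀ e ∉ X, B e = A e

/-- `F ⊆ E` is a feasible query if every revelation of `F` admits a uniformly optimal basis. -/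
def FeasibleQuery (M : Matroid α) (A : α → Set ℝ) (F : Set α) : Prop :=
  F ⊆ M.E ∧ ∀ B, IsRevelation M A F B → ∃ T, IsUOB M B T

/-! ### Auxiliary lemmas on `setWeight` -/

lemma setWeight_eq_sum (w : α → ℝ) {T : Set α} (hT : T.Finite) :
    setWeight w T = ∑ x ∈ hT.toFinset, w x := by
  rw [setWeight, ← finsum_mem_coe_finset, Set.Finite.coe_toFinset]

lemma setWeight_exchange (w : α → ℝ) {T : Set α} (hT : T.Finite) {e f : α}
    (hf : f ∈ T) (he : e ∉ T) :
    setWeight w (insert e (T \ {f})) = setWeight w T - w f + w e := by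
  classical
  have hT' : (insert e (T \ {f})).Finite := (hT.diff (t := {f})).insert e
  have hcoe : hT'.toFinset = insert e (hT.toFinset.erase f) := by
    ext x
    simp [Set.Finite.mem_toFinset, Finset.mem_insert, Finset.mem_erase, and_comm]
  rw [setWeight_eq_sum w hT', setWeight_eq_sum w hT, hcoe,
    Finset.sum_insert (by simp [he, fun h : e = f => he (h ▸ hf)]),
    Finset.sum_erase_eq_sub (by simpa using hf)]
  ring

lemma setWeight_update_mem (w : α → ℝ) {T : Set α} (hT : T.Finite) {e : α} (he : e ∈ T)
    (r : ℝ) [DecidableEq α] :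
    setWeight (Function.update w e r) T = setWeight w T - w e + r := by
  classical
  rw [setWeight_eq_sum _ hT, setWeight_eq_sum w hT,
    Finset.sum_update_of_mem (by simpa using he),
    ← Finset.sum_erase_eq_sub (f := w) (by simpa using he)]
  have : hT.toFinset \ {e} = hT.toFinset.erase e := by
    ext x; simp [Finset.mem_erase, and_comm]
  rw [this]; ring

lemma setWeight_update_not_mem (w : α → ℝ) {T : Set α} {e : α} (he : e ∉ T)
    (r : ℝ) [DecidableEq α] :
    setWeight (Function.update w e r) T = setWeight w T := by
  apply finsum_mem_congr rfl
  intro x hx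
  have hxe : x ≠ e := by rintro rfl; exact he hx
  exact Function.update_of_ne hxe _ _

/-! ### Existence of realizations -/

lemma exists_realization (M : Matroid α) (B : α → Set ℝ)
    (hne : ∀ g ∈ M.E, (B g).Nonempty) : ∃ w, Realization M B w := by
  classical
  choose f hf using hne
  exact ⟨fun g => if h : g ∈ M.E then f g h else 0,
    fun g hg => by simp only [dif_pos hg]; exact hf g hg⟩

/-! ### Closure / fundamental-circuit style lemma -/

/-- If `T` is a finite independent set spanning `e`, then `e` is spanned by the set of
elements `f ∈ T` such that `T \ {f}` does not span `e` (the fundamental circuit minus `e`). -/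
lemma mem_closure_critical (M : Matroid α) {T : Set α} (hTfin : T.Finite) (hT : M.Indep T)
    {e : α} (he : e ∈ M.closure T) :
    e ∈ M.closure {f | f ∈ T ∧ e ∉ M.closure (T \ {f})} := by
  -- find a minimal subset `C₀ ⊆ T` spanning `e`
  have key : ∀ n (C : Set α), C ⊆ T → C.ncard ≤ n → e ∈ M.closure C →
      ∃ C₀, C₀ ⊆ C ∧ e ∈ M.closure C₀ ∧ ∀ f ∈ C₀, e ∉ M.closure (C₀ \ {f}) := by
    intro n
    induction n with
    | zero =>
      intro C hCT hcard hecl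
      have hCfin : C.Finite := hTfin.subset hCT
      have hC : C = ∅ := by
        rw [← Set.ncard_eq_zero hCfin]; omega
      exact ⟨C, subset_rfl, hecl, by simp [hC]⟩
    | succ n ih =>
      intro C hCT hcard hecl
      by_cases h : ∀ f ∈ C, e ∉ M.closure (C \ {f})
      · exact ⟨C, subset_rfl, hecl, h⟩
      · push_neg at h
        obtain ⟨f, hfC, hf⟩ := h
        have hCfin : C.Finite := hTfin.subset hCT
        have hlt : (C \ {f}).ncard < C.ncard := Set.ncard_diff_singleton_lt_of_mem hfC hCfin
        obtain ⟨C₀, hC₀, h1, h2⟩ := ih (C \ {f}) (Set.diff_subset.trans hCT) (by omega) hf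
        exact ⟨C₀, hC₀.trans Set.diff_subset, h1, h2⟩
  obtain ⟨C₀, hC₀T, hecl₀, hmin⟩ := key T.ncard T subset_rfl le_rfl he
  have hsub : C₀ ⊆ {f | f ∈ T ∧ e ∉ M.closure (T \ {f})} := by
    intro f hf
    have hfT : f ∈ T := hC₀T hf
    refine ⟨hfT, fun hecl' => ?_⟩
    have h1 : e ∈ M.closure (insert f (C₀ \ {f})) \ M.closure (C₀ \ {f}) := by
      rw [Set.insert_diff_singleton, Set.insert_eq_of_mem hf]
      exact ⟨hecl₀, hmin f hf⟩
    have h2 := Matroid.closure_exchange h1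
    have h3 : f ∈ M.closure (insert e (T \ {f})) :=
      M.closure_subset_closure
        (Set.insert_subset_insert (Set.diff_subset_diff_left hC₀T)) h2.1
    rw [Matroid.closure_insert_eq_of_mem_closure hecl'] at h3
    exact hT.notMem_closure_diff_of_mem hfT h3
  exact M.closure_subset_closure hsub hecl₀

/-! ### Key lemmas: a certain colored element can be put in / kept out of a UOB -/

lemma blue_exists_uob_mem (M : Matroid α) (hE : M.E.Finite) (B : α → Set ℝ)
    (hne : ∀ g ∈ M.E, (B g).Nonempty) {e : α} (heE : e ∈ M.E) {r : ℝ} (hBe : B e = {r})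
    (hblue : Blue M B e) {T : Set α} (hT : IsUOB M B T) :
    ∃ T', IsUOB M B T' ∧ e ∈ T' := by
  classical
  obtain ⟨w₀, hw₀⟩ := exists_realization M B hne
  by_cases heT : e ∈ T
  · exact ⟨T, hT, heT⟩
  have hTbase : M.IsBase T := (hT w₀ hw₀).1
  have hTE : T ⊆ M.E := hTbase.subset_ground
  have hTfin : T.Finite := hE.subset hTE
  set F : Set α := {f | f ∈ T ∧ e ∉ M.closure (T \ {f})} with hF
  have hbaseF : ∀ f ∈ F, M.IsBase (insert e (T \ {f})) := by
    intro f hf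
    have hind : M.Indep (insert e (T \ {f})) := by
      refine ((hTbase.indep.subset Set.diff_subset).insert_indep_iff_of_notMem
        (fun h => heT h.1)).mpr ⟨heE, hf.2⟩
    exact hTbase.exchange_isBase_of_indep heT hind
  have hue_gen : ∀ u : α → ℝ, Realization M B u → u e = r := by
    intro u hu
    have := hu e heE
    rwa [hBe, Set.mem_singleton_iff] at this
  have hwle : ∀ f ∈ F, ∀ u, Realization M B u → u f ≤ r := by
    intro f hf u hu
    have h1 := (hT u hu).2 _ (hbaseF f hf)
    rw [setWeight_exchange u hTfin hf.1 heT, hue_gen u hu] at h1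
    linarith
  have hex : ∃ f ∈ F, ∀ u, Realization M B u → r ≤ u f := by
    by_contra h
    push_neg at h
    have hx : ∀ f ∈ F, ∃ x ∈ B f, x < r := by
      intro f hf
      obtain ⟨u, hu, hlt⟩ := h f hf
      exact ⟨u f, hu f (hTE hf.1), hlt⟩
    choose x hxB hxlt using hx
    set u : α → ℝ := fun g => if h : g ∈ F then x g h else w₀ g with hu
    have hureal : Realization M B u := by
      intro g hg
      by_cases hgF : g ∈ F
      · simpa [hu, dif_pos hgF] using hxB g hgF
      · simpa [hu, dif_neg hgF] using hw₀ g hg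
    obtain ⟨S, hS, heS⟩ := hblue u hureal
    have hSE : S ⊆ M.E := hS.1.subset_ground
    have hSfin : S.Finite := hE.subset hSE
    have heclT : e ∈ M.closure T := hTbase.closure_eq ▸ heE
    have hclF : e ∈ M.closure F := mem_closure_critical M hTfin hTbase.indep heclT
    have hexf : ∃ f ∈ F, f ∉ M.closure (S \ {e}) := by
      by_contra hall
      push_neg at hall
      have hsub : M.closure F ⊆ M.closure (S \ {e}) := by
        rw [← M.closure_closure (S \ {e})]
        exact M.closure_subset_closure hall
      exact hS.1.indep.notMem_closure_diff_of_mem heS (hsub hclF)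
    obtain ⟨f, hfF, hfcl⟩ := hexf
    have hfe : f ≠ e := by rintro rfl; exact heT hfF.1
    have hfS : f ∉ S \ {e} := fun hmem =>
      hfcl (M.mem_closure_of_mem' hmem (hTE hfF.1))
    have hfS' : f ∉ S := fun h' => hfS ⟨h', hfe⟩
    have hS'ind : M.Indep (insert f (S \ {e})) :=
      ((hS.1.indep.subset Set.diff_subset).insert_indep_iff_of_notMem hfS).mpr
        ⟨hTE hfF.1, hfcl⟩
    have hS'base := hS.1.exchange_isBase_of_indep hfS' hS'ind
    have hle := hS.2 _ hS'base
    rw [setWeight_exchange u hSfin heS hfS', hue_gen u hureal] at hle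
    have huf : u f < r := by
      have : u f = x f hfF := by simp [hu, dif_pos hfF]
      rw [this]; exact hxlt f hfF
    linarith
  obtain ⟨f, hfF, hge⟩ := hex
  refine ⟨insert e (T \ {f}), ?_, Set.mem_insert _ _⟩
  intro u hu
  refine ⟨hbaseF f hfF, fun S hSb => ?_⟩
  have h1 := (hT u hu).2 S hSb
  have huf : u f = r := le_antisymm (hwle f hfF u hu) (hge u hu)
  rw [setWeight_exchange u hTfin hfF.1 heT, huf, hue_gen u hu]
  linarith

lemma red_exists_uob_not_mem (M : Matroid α) (hE : M.E.Finite) (B : α → Set ℝ)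
    (hne : ∀ g ∈ M.E, (B g).Nonempty) {e : α} (heE : e ∈ M.E) {r : ℝ} (hBe : B e = {r})
    (hred : Red M B e) {T : Set α} (hT : IsUOB M B T) :
    ∃ T', IsUOB M B T' ∧ e ∉ T' := by
  classical
  obtain ⟨w₀, hw₀⟩ := exists_realization M B hne
  by_cases heT : e ∈ T
  swap
  · exact ⟨T, hT, heT⟩
  have hTbase : M.IsBase T := (hT w₀ hw₀).1
  have hTE : T ⊆ M.E := hTbase.subset_ground
  have hTfin : T.Finite := hE.subset hTE
  set K : Set α := {g | g ∈ M.E ∧ g ≠ e ∧ g ∉ M.closure (T \ {e})} with hK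
  have hgT : ∀ g ∈ K, g ∉ T := by
    rintro g ⟨hgE, hge, hgcl⟩ hgTmem
    exact hgcl (M.mem_closure_of_mem' ⟨hgTmem, hge⟩ hgE)
  have hbaseK : ∀ g ∈ K, M.IsBase (insert g (T \ {e})) := by
    intro g hg
    have hind : M.Indep (insert g (T \ {e})) := by
      refine ((hTbase.indep.subset Set.diff_subset).insert_indep_iff_of_notMem
        (fun h => (hgT g hg) h.1)).mpr ⟨hg.1, hg.2.2⟩
    exact hTbase.exchange_isBase_of_indep (hgT g hg) hind
  have hue_gen : ∀ u : α → ℝ, Realization M B u → u e = r := by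
    intro u hu
    have := hu e heE
    rwa [hBe, Set.mem_singleton_iff] at this
  have hwge : ∀ g ∈ K, ∀ u, Realization M B u → r ≤ u g := by
    intro g hg u hu
    have h1 := (hT u hu).2 _ (hbaseK g hg)
    rw [setWeight_exchange u hTfin heT (hgT g hg), hue_gen u hu] at h1
    linarith
  have hex : ∃ g ∈ K, ∀ u, Realization M B u → u g ≤ r := by
    by_contra h
    push_neg at h
    have hx : ∀ g ∈ K, ∃ x ∈ B g, r < x := by
      intro g hg
      obtain ⟨u, hu, hlt⟩ := h g hg
      exact ⟨u g, hu g hg.1, hlt⟩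
    choose x hxB hxlt using hx
    set u : α → ℝ := fun g => if h : g ∈ K then x g h else w₀ g with hu
    have hureal : Realization M B u := by
      intro g hg
      by_cases hgK : g ∈ K
      · simpa [hu, dif_pos hgK] using hxB g hgK
      · simpa [hu, dif_neg hgK] using hw₀ g hg
    obtain ⟨S, hS, heS⟩ := hred u hureal
    have hSE : S ⊆ M.E := hS.1.subset_ground
    have hSfin : S.Finite := hE.subset hSE
    have heclS : e ∈ M.closure S := hS.1.closure_eq ▸ heE
    have hclFS : e ∈ M.closure {g | g ∈ S ∧ e ∉ M.closure (S \ {g})} :=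
      mem_closure_critical M hSfin hS.1.indep heclS
    have hexg : ∃ g, (g ∈ S ∧ e ∉ M.closure (S \ {g})) ∧ g ∉ M.closure (T \ {e}) := by
      by_contra hall
      push_neg at hall
      have hsub : M.closure {g | g ∈ S ∧ e ∉ M.closure (S \ {g})} ⊆
          M.closure (T \ {e}) := by
        rw [← M.closure_closure (T \ {e})]
        exact M.closure_subset_closure (fun g hg => hall g hg)
      exact hTbase.indep.notMem_closure_diff_of_mem heT (hsub hclFS)
    obtain ⟨g, ⟨hgS, hgcl⟩, hgclT⟩ := hexg
    have hge : g ≠ e := by rintro rfl; exact heS hgS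
    have hgK : g ∈ K := ⟨hSE hgS, hge, hgclT⟩
    have heS' : e ∉ S \ {g} := fun hmem => heS hmem.1
    have hS'ind : M.Indep (insert e (S \ {g})) :=
      ((hS.1.indep.subset Set.diff_subset).insert_indep_iff_of_notMem heS').mpr
        ⟨heE, hgcl⟩
    have heSnot : e ∉ S := heS
    have hS'base := hS.1.exchange_isBase_of_indep heSnot hS'ind
    have hle := hS.2 _ hS'base
    rw [setWeight_exchange u hSfin hgS heSnot, hue_gen u hureal] at hle
    have hug : r < u g := by
      have : u g = x g hgK := by simp [hu, dif_pos hgK]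
      rw [this]; exact hxlt g hgK
    linarith
  obtain ⟨g, hgK, hle⟩ := hex
  refine ⟨insert g (T \ {e}), ?_, ?_⟩
  · intro u hu
    refine ⟨hbaseK g hgK, fun S hSb => ?_⟩
    have h1 := (hT u hu).2 S hSb
    have hug : u g = r := le_antisymm (hle u hu) (hwge g hgK u hu)
    rw [setWeight_exchange u hTfin heT (hgT g hgK), hug, hue_gen u hu]
    linarith
  · rintro (h | h)
    · exact hgK.2.1 h.symm
    · exact h.2 rfl

/-! ### Removing a colored element from a feasible query -/

lemma feasibleQuery_diff_of_colored (M : Matroid α) (A : α → Set ℝ)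
    (hE : M.E.Finite) (hA : IsAreaFun M A)
    (X : Set α) (hX : FeasibleQuery M A X)
    (e : α) (heX : e ∈ X) (hc : Colored M A e) :
    FeasibleQuery M A (X \ {e}) := by
  classical
  obtain ⟨hXE, hXfeas⟩ := hX
  refine ⟨Set.diff_subset.trans hXE, ?_⟩
  intro B hB
  obtain ⟨hB1, hB2⟩ := hB
  have heE : e ∈ M.E := hXE heX
  obtain ⟨r, hr⟩ := (hA e heE).1
  set B' : α → Set ℝ := fun g => if g = e then {r} else B g with hB'def
  have hB'e : B' e = {r} := by simp [hB'def]
  have hB'ne : ∀ g, g ≠ e → B' g = B g := by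
    intro g hg; simp [hB'def, hg]
  have hBe : B e = A e := hB2 e (fun h => h.2 rfl)
  have hrev : IsRevelation M A X B' := by
    constructor
    · intro g hg
      by_cases hge : g = e
      · subst hge; exact ⟨r, hr, hB'e⟩
      · obtain ⟨s, hs, hBs⟩ := hB1 g ⟨hg, hge⟩
        exact ⟨s, hs, by rw [hB'ne g hge]; exact hBs⟩
    · intro g hg
      have hge : g ≠ e := fun h => hg (h ▸ heX)
      rw [hB'ne g hge]
      exact hB2 g (fun h => hg h.1)
  obtain ⟨T, hT⟩ := hXfeas B' hrev
  have hne' : ∀ g ∈ M.E, (B' g).Nonempty := by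
    intro g hg
    by_cases hge : g = e
    · subst hge; rw [hB'e]; exact Set.singleton_nonempty r
    · rw [hB'ne g hge]
      by_cases hgX : g ∈ X \ {e}
      · obtain ⟨s, _, hBs⟩ := hB1 g hgX
        rw [hBs]; exact Set.singleton_nonempty s
      · rw [hB2 g hgX]; exact (hA g hg).1
  have hBsubA : ∀ w, Realization M B w → Realization M A w := by
    intro w hw g hg
    have hwg := hw g hg
    by_cases hgX : g ∈ X \ {e}
    · obtain ⟨s, hs, hBs⟩ := hB1 g hgX
      rw [hBs, Set.mem_singleton_iff] at hwg
      rw [hwg]; exact hs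
    · rwa [hB2 g hgX] at hwg
  have hB'subB : ∀ w, Realization M B' w → Realization M B w := by
    intro w hw g hg
    have hwg := hw g hg
    by_cases hge : g = e
    · subst hge
      rw [hB'e, Set.mem_singleton_iff] at hwg
      rw [hBe, hwg]; exact hr
    · rwa [hB'ne g hge] at hwg
  have hB'subA : ∀ w, Realization M B' w → Realization M A w :=
    fun w hw => hBsubA w (hB'subB w hw)
  -- the updated realization
  have hupd : ∀ w, Realization M B w → Realization M B' (Function.update w e r) := by
    intro w hw g hg
    by_cases hge : g = e
    · subst hge
      rw [hB'e, Function.update_self]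
      exact rfl
    · rw [Function.update_of_ne hge, hB'ne g hge]
      exact hw g hg
  rcases hc with hblue | hred
  · have hblue' : Blue M B' e := fun w hw => hblue w (hB'subA w hw)
    obtain ⟨T', hT', heT'⟩ := blue_exists_uob_mem M hE B' hne' heE hB'e hblue' hT
    refine ⟨T', ?_⟩
    intro w hw
    have hmin' := hT' (Function.update w e r) (hupd w hw)
    have hT'fin : T'.Finite := hE.subset hmin'.1.subset_ground
    refine ⟨hmin'.1, fun S hSb => ?_⟩
    obtain ⟨S', hS', heS'⟩ := hblue w (hBsubA w hw)
    have hS'fin : S'.Finite := hE.subset hS'.1.subset_ground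
    have h1 := hmin'.2 S' hS'.1
    rw [setWeight_update_mem w hT'fin heT' r, setWeight_update_mem w hS'fin heS' r] at h1
    have h2 := hS'.2 S hSb
    linarith
  · have hred' : Red M B' e := fun w hw => hred w (hB'subA w hw)
    obtain ⟨T', hT', heT'⟩ := red_exists_uob_not_mem M hE B' hne' heE hB'e hred' hT
    refine ⟨T', ?_⟩
    intro w hw
    have hmin' := hT' (Function.update w e r) (hupd w hw)
    refine ⟨hmin'.1, fun S hSb => ?_⟩
    obtain ⟨S', hS', heS'⟩ := hred w (hBsubA w hw)
    have h1 := hmin'.2 S' hS'.1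
    rw [setWeight_update_not_mem w heT' r, setWeight_update_not_mem w heS' r] at h1
    have h2 := hS'.2 S hSb
    linarith

/-- Removing a colored element from a feasible query keeps it feasible; consequently
minimal feasible queries consist only of uncertain uncolored elements. -/
theorem feasible_remove_colored (M : Matroid α) (A : α → Set ℝ)
    (hE : M.E.Finite) (hA : IsAreaFun M A)
    (X : Set α) (hX : FeasibleQuery M A X)
    (e : α) (heX : e ∈ X) (hc : Colored M A e) :
    FeasibleQuery M A (X \ {e}) ∧
      ∀ Y, (FeasibleQuery M A Y ∧ ∀ Z, FeasibleQuery M A Z → Z ⊆ Y → Z = Y) →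
        ∀ f ∈ Y, ¬ Certain A f ∧ ¬ Colored M A f := by
  constructor
  · exact feasibleQuery_diff_of_colored M A hE hA X hX e heX hc
  · rintro Y ⟨hYfeas, hYmin⟩ f hfY
    constructor
    · rintro ⟨s, hs⟩
      have hfeas' : FeasibleQuery M A (Y \ {f}) := by
        refine ⟨Set.diff_subset.trans hYfeas.1, fun B hB => ?_⟩
        apply hYfeas.2 B
        constructor
        · intro g hg
          by_cases hgf : g = f
          · subst hgf
            refine ⟨s, by rw [hs]; exact rfl, ?_⟩
            rw [hB.2 g (fun h => h.2 rfl), hs]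
          · exact hB.1 g ⟨hg, hgf⟩
        · intro g hg
          exact hB.2 g (fun h => hg h.1)
      have heq := hYmin _ hfeas' Set.diff_subset
      rw [← heq] at hfY
      exact hfY.2 rfl
    · intro hcol
      have heq := hYmin _ (feasibleQuery_diff_of_colored M A hE hA Y hYfeas f hfY hcol)
        Set.diff_subset
      rw [← heq] at hfY
      exact hfY.2 rfl
end

section
/- Let (M, 𝒜) be an uncertainty matroid on a finite ground set E. A set X ⊆ E is a witness set if and only if there exist an uncertain element e ∈ X and a circuit C of the matroid M'_e such that e ∈ C and C ∩ (mid(e) ∪ (X ∩ both(e))) ≠ ∅. -/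
open Matroid

variable {α : Type*}

/-- A witness set: a set intersecting every feasible query. -/
def WitnessSet (M : Matroid α) (A : α → Set ℝ) (X : Set α) : Prop :=
  ∀ F, FeasibleQuery M A F → (X ∩ F).Nonempty

/-- Deletion of a set of elements from a matroid. -/
def Matroid.del (M : Matroid α) (D : Set α) : Matroid α := M ↾ (M.E \ D)

/-- Contraction of a set of elements in a matroid, defined by duality. -/
def Matroid.con (M : Matroid α) (C : Set α) : Matroid α := (M✶.del C)✶

/-- A circuit: a minimal dependent set. -/
def Matroid.IsCircuit' (M : Matroid α) (C : Set α) : Prop :=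
  M.Dep C ∧ ∀ D, D ⊂ C → M.Indep D

/-- `low e`: elements of `E - e` whose area lies entirely at or below `L_e`. -/
def lowSet (M : Matroid α) (A : α → Set ℝ) (e : α) : Set α :=
  {f ∈ M.E | f ≠ e ∧ sSup (A f) ≤ sInf (A e)}

/-- `high e`: elements of `E - e` whose area lies entirely at or above `U_e`. -/
def highSet (M : Matroid α) (A : α → Set ℝ) (e : α) : Set α :=
  {f ∈ M.E | f ≠ e ∧ sSup (A e) ≤ sInf (A f)}

/-- `mid e`: elements of `E - e` whose area meets the open interval `(L_e, U_e)`. -/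
def midSet (M : Matroid α) (A : α → Set ℝ) (e : α) : Set α :=
  {f ∈ M.E | f ≠ e ∧ (A f ∩ Set.Ioo (sInf (A e)) (sSup (A e))).Nonempty}

/-- `both e`: elements of `(E - e) \ mid e` whose area meets both `(-∞, L_e]` and `[U_e, ∞)`. -/
def bothSet (M : Matroid α) (A : α → Set ℝ) (e : α) : Set α :=
  {f ∈ M.E | f ≠ e ∧ f ∉ midSet M A e ∧
    (A f ∩ Set.Iic (sInf (A e))).Nonempty ∧ (A f ∩ Set.Ici (sSup (A e))).Nonempty}

/-- The matroid `M'_e = M / low(e) \ high(e)`. -/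
def minorAt (M : Matroid α) (A : α → Set ℝ) (e : α) : Matroid α :=
  (M.con (lowSet M A e)).del (highSet M A e)

open Set

namespace Matroid

variable {M : Matroid α} {I J B C D K L X Z : Set α} {e f x y : α}

lemma del_ground' (M : Matroid α) (D : Set α) : (M.del D).E = M.E \ D := rfl

lemma del_indep_iff {D : Set α} : (M.del D).Indep I ↔ M.Indep I ∧ I ⊆ M.E \ D :=
  restrict_indep_iff

lemma con_ground' (M : Matroid α) (K : Set α) : (M.con K).E = M.E \ K := rfl

lemma con_indep_iff' {K : Set α} (hK : K ⊆ M.E) :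
    (M.con K).Indep I ↔ I ⊆ M.E \ K ∧ ∃ B, M.IsBase B ∧ I ⊆ B ∧ M.IsBasis (B ∩ K) K := by
  have hKd : K ⊆ M✶.E := by simpa
  constructor
  · intro h
    rw [Matroid.con, Matroid.del, dual_indep_iff_exists'] at h
    obtain ⟨hIE, B', hB', hdj⟩ := h
    rw [restrict_ground_eq] at hIE
    have hB'' : M✶.IsBasis B' (M✶.E \ K) := (isBase_restrict_iff diff_subset).1 hB'
    obtain ⟨B₀, hB₀, hB'eq⟩ := hB''.exists_isBase
    have hMB : M.IsBase (M.E \ B₀) := hB₀.compl_isBase_of_dual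
    have hIE' : I ⊆ M.E \ K := by simpa using hIE
    refine ⟨hIE', M.E \ B₀, hMB, ?_, ?_⟩
    · intro z hz
      refine ⟨(hIE' hz).1, fun hzB₀ => ?_⟩
      exact hdj.ne_of_mem hz (by rw [hB'eq]; exact ⟨hzB₀, by simpa using hIE' hz⟩) rfl
    · rw [hMB.inter_isBasis_iff_compl_inter_isBasis_dual hK]
      have hB₀E : B₀ ⊆ M.E := by simpa using hB₀.subset_ground
      rw [diff_diff_cancel_left hB₀E]
      have h2 : B₀ ∩ (M.E \ K) = B' := by rw [hB'eq]; simp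
      rw [h2]
      simpa using hB''
  · rintro ⟨hIE, B, hMB, hIB, hbas⟩
    rw [Matroid.con, Matroid.del, dual_indep_iff_exists']
    refine ⟨by simpa using hIE, (M.E \ B) ∩ (M.E \ K), ?_, ?_⟩
    · rw [isBase_restrict_iff diff_subset]
      have := hMB.compl_inter_isBasis_of_inter_isBasis hbas
      simpa using this
    · exact (disjoint_sdiff_right.mono_right inter_subset_left).mono_left hIB

lemma indep_augment (hE : M.E.Finite) (hI : M.Indep I) (hJ : M.Indep J)
    (hcard : I.ncard < J.ncard) : ∃ x ∈ J \ I, M.Indep (insert x I) := by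
  set N := M ↾ (I ∪ J) with hN
  have hNI : N.Indep I := hI.indep_restrict_of_subset subset_union_left
  have hNJ : N.Indep J := hJ.indep_restrict_of_subset subset_union_right
  obtain ⟨B, hB, hJB⟩ := hNJ.exists_isBase_superset
  have hIfin : I.Finite := hE.subset hI.subset_ground
  have hJfin : J.Finite := hE.subset hJ.subset_ground
  have hBfin : B.Finite := (hIfin.union hJfin).subset hB.subset_ground
  have hInotbase : ¬ N.IsBase I := by
    intro hIb
    have hcard2 := N.isBase_exchange.encard_isBase_eq hIb hB
    have : J.ncard ≤ B.ncard := ncard_le_ncard hJB hBfin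
    have hIB : I.ncard = B.ncard := by
      rw [Set.ncard_def, Set.ncard_def, hcard2]
    omega
  obtain ⟨z, hz, hzI⟩ := hNI.exists_insert_of_not_isBase hInotbase hB
  have hzJ : z ∈ J := by
    have := hB.subset_ground hz.1
    rcases this with h | h
    · exact absurd h hz.2
    · exact h
  exact ⟨z, ⟨hzJ, hz.2⟩, hzI.of_restrict⟩

lemma basis_ncard_eq {J' : Set α} (hJ₁ : M.IsBasis J K) (hJ : M.IsBasis J' K) : J'.ncard = J.ncard := by
  have h1 := hJ₁.restrict_isBase
  have h2 := hJ.restrict_isBase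
  rw [Set.ncard_def, Set.ncard_def, (M ↾ K).isBase_exchange.encard_isBase_eq h2 h1]

end Matroid

namespace Matroid

variable {M : Matroid α} {I J J' B C D K L T X Z : Set α} {e f h x y : α}

lemma indep_union_basis_of_basis (hE : M.E.Finite) (hJ₁ : M.IsBasis J' K) (hJ : M.IsBasis J K)
    (hIK : Disjoint I K) (hind : M.Indep (I ∪ J')) : M.Indep (I ∪ J) := by
  have hIfin : I.Finite := hE.subset (subset_union_left.trans hind.subset_ground)
  have key : ∀ n Z, (I \ Z).ncard = n → M.Indep Z → J ⊆ Z → Z ⊆ I ∪ J → M.Indep (I ∪ J) := by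
    intro n
    induction n using Nat.strong_induction_on with
    | _ n ih =>
      intro Z hn hZ hJZ hZIJ
      by_cases hIZ : I ⊆ Z
      · have h2 : Z = I ∪ J := Subset.antisymm hZIJ (union_subset hIZ hJZ)
        rwa [← h2]
      · have hZfin : Z.Finite := hE.subset hZ.subset_ground
        obtain ⟨y, hyI, hyZ⟩ := not_subset.1 hIZ
        have hZcard : Z.ncard < (I ∪ J').ncard := by
          have hZsub : Z ⊆ (Z ∩ I) ∪ J := by
            intro z hz
            rcases hZIJ hz with h1 | h1
            · exact Or.inl ⟨hz, h1⟩
            · exact Or.inr h1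
          have h1 : Z.ncard ≤ ((Z ∩ I) ∪ J).ncard :=
            ncard_le_ncard hZsub ((hZfin.subset inter_subset_left : (Z ∩ I).Finite).union
              (hE.subset hJ.indep.subset_ground))
          have h1' : ((Z ∩ I) ∪ J).ncard ≤ (Z ∩ I).ncard + J.ncard := ncard_union_le _ _
          have h2 : (Z ∩ I).ncard < I.ncard :=
            ncard_lt_ncard ⟨inter_subset_right, fun hsub => hyZ (hsub hyI).1⟩ hIfin
          have h3 : J.ncard = J'.ncard := basis_ncard_eq hJ₁ hJ
          have h4 : (I ∪ J').ncard = I.ncard + J'.ncard := by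
            rw [ncard_union_eq (hIK.mono_right hJ₁.subset) hIfin
              (hE.subset hJ₁.indep.subset_ground)]
          omega
        obtain ⟨z, hz, hzZ⟩ := indep_augment hE hZ hind hZcard
        have hzI : z ∈ I := by
          rcases hz.1 with h1 | h1
          · exact h1
          · exfalso
            have hzK : z ∈ K := hJ₁.subset h1
            have hins : M.Indep (insert z J) := hzZ.subset (insert_subset_insert hJZ)
            have heq := hJ.eq_of_subset_indep hins (subset_insert _ _)
              (insert_subset hzK hJ.subset)
            exact hz.2 (hJZ (heq ▸ mem_insert z J))
        refine ih ((I \ insert z Z).ncard) ?_ (insert z Z) rfl hzZ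
          (hJZ.trans (subset_insert _ _)) (insert_subset (Or.inl hzI) hZIJ)
        have hss : I \ insert z Z ⊂ I \ Z := by
          refine ⟨diff_subset_diff_right (subset_insert _ _), fun hsub => ?_⟩
          exact (hsub ⟨hzI, hz.2⟩).2 (mem_insert _ _)
        exact hn ▸ ncard_lt_ncard hss (hIfin.diff)
  exact key _ J rfl hJ.indep Subset.rfl subset_union_right

lemma IsBasis.con_indep_iff (hE : M.E.Finite) (hJK : M.IsBasis J K) :
    (M.con K).Indep I ↔ I ⊆ M.E \ K ∧ M.Indep (I ∪ J) := by
  have hK := hJK.subset_ground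
  rw [con_indep_iff' hK]
  constructor
  · rintro ⟨hIE, B, hB, hIB, hbas⟩
    refine ⟨hIE, ?_⟩
    have h1 : M.Indep (I ∪ B ∩ K) := hB.indep.subset (union_subset hIB inter_subset_left)
    exact indep_union_basis_of_basis hE hbas hJK (disjoint_sdiff_left.mono_left hIE) h1
  · rintro ⟨hIE, hIJ⟩
    obtain ⟨B, hB, hIJB⟩ := hIJ.exists_isBase_superset
    refine ⟨hIE, B, hB, subset_union_left.trans hIJB, ?_⟩
    have hJBK : J ⊆ B ∩ K := subset_inter (subset_union_right.trans hIJB) hJK.subset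
    have heq := hJK.eq_of_subset_indep (hB.indep.inter_right K) hJBK inter_subset_right
    rwa [← heq]

lemma IsCircuit'.subset_ground (hC : M.IsCircuit' C) : C ⊆ M.E := hC.1.subset_ground

lemma IsCircuit'.diff_singleton_indep (hC : M.IsCircuit' C) (he : e ∈ C) :
    M.Indep (C \ {e}) := hC.2 _ (sdiff_singleton_ssubset.2 he)

lemma IsCircuit'.mem_closure_diff_singleton (hC : M.IsCircuit' C) (he : e ∈ C) :
    e ∈ M.closure (C \ {e}) := by
  have hI := hC.diff_singleton_indep he
  have hdep : M.Dep (insert e (C \ {e})) := by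
    rw [insert_diff_singleton, insert_eq_of_mem he]
    exact hC.1
  exact ((hI.insert_dep_iff).1 hdep).1

lemma exists_isCircuit_subset (hE : M.E.Finite) (hD : M.Dep D) :
    ∃ C, C ⊆ D ∧ M.IsCircuit' C := by
  have key : ∀ n D, M.Dep D → D.ncard = n → ∃ C, C ⊆ D ∧ M.IsCircuit' C := by
    intro n
    induction n using Nat.strong_induction_on with
    | _ n ih =>
      intro D hD hn
      by_cases hmin : ∀ D', D' ⊂ D → M.Indep D'
      · exact ⟨D, Subset.rfl, hD, hmin⟩
      · push_neg at hmin
        obtain ⟨D', hD'sub, hD'dep⟩ := hmin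
        have hD'D : M.Dep D' := ⟨hD'dep, hD'sub.subset.trans hD.subset_ground⟩
        obtain ⟨C, hCsub, hC⟩ := ih (D'.ncard)
          (hn ▸ ncard_lt_ncard hD'sub (hE.subset hD.subset_ground)) D' hD'D rfl
        exact ⟨C, hCsub.trans hD'sub.subset, hC⟩
  exact key _ D hD rfl

lemma base_exchange_of_not_mem_closure (hT : M.IsBase T) (hx : x ∈ T) (hy : y ∈ M.E)
    (hycl : y ∉ M.closure (T \ {x})) : M.IsBase (insert y (T \ {x})) := by
  have hyT : y ∉ T \ {x} := fun hc =>
    hycl (M.mem_closure_of_mem hc (diff_subset.trans hT.subset_ground))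
  have hind : M.Indep (insert y (T \ {x})) := by
    have hTx : M.Indep (T \ {x}) := hT.indep.subset diff_subset
    rw [hTx.insert_indep_iff_of_notMem hyT]
    exact ⟨hy, hycl⟩
  by_cases hyT' : y ∈ T
  · by_cases hxy : y = x
    · rwa [hxy, insert_diff_singleton, insert_eq_of_mem hx]
    · exact absurd ⟨hyT', hxy⟩ hyT
  · exact hT.exchange_isBase_of_indep hyT' hind

lemma exchange_base_of_circuit (hT : M.IsBase T) (hyT : y ∉ T) (hC : M.IsCircuit' C)
    (hCsub : C ⊆ insert y T) (hh : h ∈ C) (hhy : h ≠ y) : M.IsBase (insert y (T \ {h})) := by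
  have hhT : h ∈ T := ((hCsub hh).resolve_left hhy)
  have hyC : y ∈ C := by
    by_contra hyC
    exact hC.1.not_indep (hT.indep.subset
      (fun z hz => (hCsub hz).resolve_left (fun hzy => hyC (hzy ▸ hz))))
  have hf : h ∈ M.closure (C \ {h}) := hC.mem_closure_diff_singleton hh
  have hind : M.Indep (insert y (T \ {h})) := by
    have hTh : M.Indep (T \ {h}) := hT.indep.subset diff_subset
    rw [hTh.insert_indep_iff_of_notMem (fun hc => hyT hc.1)]
    refine ⟨hC.subset_ground hyC, fun hycl => ?_⟩
    have h1 : C \ {h} ⊆ M.closure (T \ {h}) := by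
      intro z hz
      rcases hCsub hz.1 with h2 | h2
      · exact h2 ▸ hycl
      · exact M.mem_closure_of_mem ⟨h2, hz.2⟩ (diff_subset.trans hT.subset_ground)
    exact (hT.indep.notMem_closure_diff_of_mem hhT)
      ((M.closure_subset_closure_of_subset_closure h1) hf)
  exact hT.exchange_isBase_of_indep hyT hind

end Matroid


section InstanceLemmas

variable {M : Matroid α} {A : α → Set ℝ} {C I J T : Set α} {e f g x y : α}

lemma setWeight_insert (w : α → ℝ) (hy : y ∉ T) (hfin : T.Finite) :
    setWeight w (insert y T) = w y + setWeight w T :=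
  finsum_mem_insert w hy hfin

lemma setWeight_eq_add_diff (w : α → ℝ) (hx : x ∈ T) (hfin : T.Finite) :
    setWeight w T = w x + setWeight w (T \ {x}) := by
  have h1 : T = insert x (T \ {x}) := by
    rw [insert_diff_singleton, insert_eq_of_mem hx]
  nth_rewrite 1 [h1]
  exact setWeight_insert w (fun hc => hc.2 rfl) (hfin.diff)

lemma uncertain_inf_lt_sup (hA : IsAreaFun M A) (he : e ∈ M.E) (hunc : ¬ Certain A e) :
    sInf (A e) < sSup (A e) := by
  obtain ⟨hne, hbb, hba⟩ := hA e he
  rcases lt_or_ge (sInf (A e)) (sSup (A e)) with hlt | hge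
  · exact hlt
  · exfalso
    apply hunc
    refine ⟨sInf (A e), Subset.antisymm ?_ ?_⟩
    · intro a ha
      exact le_antisymm ((le_csSup hba ha).trans hge) (csInf_le hbb ha)
    · obtain ⟨b, hb⟩ := hne
      have hbeq : b = sInf (A e) :=
        le_antisymm ((le_csSup hba hb).trans hge) (csInf_le hbb hb)
      intro a ha
      rw [mem_singleton_iff] at ha
      rwa [ha, ← hbeq]

lemma classify (hA : IsAreaFun M A) (he : e ∈ M.E) (hunc : ¬ Certain A e)
    (hf : f ∈ M.E) (hfe : f ≠ e) :
    f ∈ lowSet M A e ∨ f ∈ highSet M A e ∨ f ∈ midSet M A e ∨ f ∈ bothSet M A e := by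
  obtain ⟨hne, hbb, hba⟩ := hA f hf
  by_cases hm : (A f ∩ Set.Ioo (sInf (A e)) (sSup (A e))).Nonempty
  · exact Or.inr (Or.inr (Or.inl ⟨hf, hfe, hm⟩))
  by_cases hl : sSup (A f) ≤ sInf (A e)
  · exact Or.inl ⟨hf, hfe, hl⟩
  by_cases hh : sSup (A e) ≤ sInf (A f)
  · exact Or.inr (Or.inl ⟨hf, hfe, hh⟩)
  refine Or.inr (Or.inr (Or.inr ⟨hf, hfe, (fun hmid => hm hmid.2.2), ?_, ?_⟩))
  · push_neg at hh
    obtain ⟨a, ha, halt⟩ := exists_lt_of_csInf_lt hne hh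
    refine ⟨a, ha, ?_⟩
    by_contra hgt
    simp only [mem_Iic, not_le] at hgt
    exact hm ⟨a, ha, hgt, halt⟩
  · push_neg at hl
    obtain ⟨a, ha, hagt⟩ := exists_lt_of_lt_csSup hne hl
    refine ⟨a, ha, ?_⟩
    by_contra hlt
    simp only [mem_Ici, not_le] at hlt
    exact hm ⟨a, ha, hagt, hlt⟩

lemma lowSet_subset_ground : lowSet M A e ⊆ M.E := fun _ hf => hf.1
lemma highSet_subset_ground : highSet M A e ⊆ M.E := fun _ hf => hf.1
lemma midSet_subset_ground : midSet M A e ⊆ M.E := fun _ hf => hf.1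
lemma bothSet_subset_ground : bothSet M A e ⊆ M.E := fun _ hf => hf.1

lemma not_mem_lowSet_self : e ∉ lowSet M A e := fun hc => hc.2.1 rfl
lemma not_mem_highSet_self : e ∉ highSet M A e := fun hc => hc.2.1 rfl
lemma not_mem_midSet_self : e ∉ midSet M A e := fun hc => hc.2.1 rfl
lemma not_mem_bothSet_self : e ∉ bothSet M A e := fun hc => hc.2.1 rfl

lemma minorAt_ground : (minorAt M A e).E = (M.E \ lowSet M A e) \ highSet M A e := rfl

lemma mem_minorAt_ground (he : e ∈ M.E) : e ∈ (minorAt M A e).E :=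
  ⟨⟨he, not_mem_lowSet_self⟩, not_mem_highSet_self⟩

lemma mem_mid_or_both_of_mem_minorAt_ground (hA : IsAreaFun M A) (he : e ∈ M.E)
    (hunc : ¬ Certain A e) (hf : f ∈ (minorAt M A e).E) (hfe : f ≠ e) :
    f ∈ midSet M A e ∨ f ∈ bothSet M A e := by
  obtain ⟨⟨hfE, hflow⟩, hfhigh⟩ := hf
  rcases classify hA he hunc hfE hfe with h | h | h | h
  · exact absurd h hflow
  · exact absurd h hfhigh
  · exact Or.inl h
  · exact Or.inr h

lemma minorAt_circuit_not_indep_union (hE : M.E.Finite) (hJ : M.IsBasis J (lowSet M A e))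
    (hC : (minorAt M A e).IsCircuit' C) : ¬ M.Indep (C ∪ J) := by
  intro hind
  have hCE : C ⊆ (minorAt M A e).E := hC.subset_ground
  have hCcon : (M.con (lowSet M A e)).Indep C := by
    rw [hJ.con_indep_iff hE]
    exact ⟨fun z hz => (hCE hz).1, hind⟩
  have hNi : (minorAt M A e).Indep C := by
    rw [minorAt, del_indep_iff]
    exact ⟨hCcon, hCE⟩
  exact hC.1.not_indep hNi

lemma minorAt_indep_union_indep (hE : M.E.Finite) (hJ : M.IsBasis J (lowSet M A e))
    (hind : (minorAt M A e).Indep I) : M.Indep (I ∪ J) := by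
  rw [minorAt, del_indep_iff] at hind
  exact ((hJ.con_indep_iff hE).1 hind.1).2

lemma minorAt_indep_of_indep_union (hE : M.E.Finite) (hJ : M.IsBasis J (lowSet M A e))
    (hIsub : I ⊆ (minorAt M A e).E) (hind : M.Indep (I ∪ J)) : (minorAt M A e).Indep I := by
  rw [minorAt, del_indep_iff]
  refine ⟨?_, hIsub⟩
  rw [hJ.con_indep_iff hE]
  exact ⟨fun z hz => (hIsub hz).1, hind⟩

lemma minorAt_circuit_closure (hE : M.E.Finite) (hJ : M.IsBasis J (lowSet M A e))
    (hC : (minorAt M A e).IsCircuit' C) (heC : e ∈ C) :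
    e ∈ M.closure ((C \ {e}) ∪ lowSet M A e) := by
  have heE : e ∈ M.E := (hC.subset_ground heC).1.1
  have hi : M.Indep ((C \ {e}) ∪ J) :=
    minorAt_indep_union_indep hE hJ (hC.diff_singleton_indep heC)
  have hdep : ¬ M.Indep (C ∪ J) := minorAt_circuit_not_indep_union hE hJ hC
  have hins : insert e ((C \ {e}) ∪ J) = C ∪ J := by
    rw [← insert_union, insert_diff_singleton, insert_eq_of_mem heC]
  have heno : e ∉ (C \ {e}) ∪ J := by
    rintro (h1 | h1)
    · exact h1.2 rfl
    · exact not_mem_lowSet_self (hJ.subset h1)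
  have hecl : e ∈ M.closure ((C \ {e}) ∪ J) := by
    by_contra hcl
    apply hdep
    rw [← hins, hi.insert_indep_iff_of_notMem heno]
    exact ⟨heE, hcl⟩
  exact M.closure_subset_closure (union_subset_union_right _ hJ.subset) hecl

lemma not_closure_low_of_minorAt_circuit (hE : M.E.Finite) (hJ : M.IsBasis J (lowSet M A e))
    (hC : (minorAt M A e).IsCircuit' C) (heC : e ∈ C) (hne : C ≠ {e}) :
    e ∉ M.closure (lowSet M A e) := by
  have hssub : {e} ⊂ C := ⟨singleton_subset_iff.2 heC, fun hsub => hne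
    (Subset.antisymm hsub (singleton_subset_iff.2 heC))⟩
  have hi : (minorAt M A e).Indep {e} := hC.2 _ hssub
  have hi2 : M.Indep (insert e J) := by
    have := minorAt_indep_union_indep hE hJ hi
    rwa [singleton_union] at this
  have heJ : e ∉ J := fun hc => not_mem_lowSet_self (hJ.subset hc)
  have hcl : e ∉ M.closure J := by
    intro hcl
    rw [hJ.indep.insert_indep_iff_of_notMem heJ] at hi2
    exact hi2.2 hcl
  rwa [hJ.closure_eq_closure] at hcl

end InstanceLemmas

section NoUOB

variable {M : Matroid α} {A : α → Set ℝ} {C T : Set α} {e f g h x y : α}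

lemma IsUOB.no_swap (hE : M.E.Finite) (hA : IsAreaFun M A) (hT : IsUOB M A T)
    (hTb : M.IsBase T) (hx : x ∈ T) (hy : y ∈ M.E) (hyT : y ∉ T)
    (hbase : M.IsBase (insert y (T \ {x}))) {a b : ℝ}
    (ha : a ∈ A x) (hb : b ∈ A y) (hba : b < a) : False := by
  classical
  set w : α → ℝ := fun z => if z = x then a else if z = y then b else
    if hz : z ∈ M.E then (hA z hz).1.some else 0 with hwdef
  have hxy : x ≠ y := fun hc => hyT (hc ▸ hx)
  have hw : Realization M A w := by
    intro z hz
    by_cases h1 : z = x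
    · subst h1; simpa [hwdef] using ha
    by_cases h2 : z = y
    · subst h2; simpa [hwdef, h1] using hb
    · simpa [hwdef, h1, h2, hz] using (hA z hz).1.some_mem
  have hmin := hT w hw
  have hTfin : T.Finite := hE.subset hTb.subset_ground
  have hle := hmin.2 _ hbase
  have hyTx : y ∉ T \ {x} := fun hc => hyT hc.1
  have h1 : setWeight w (insert y (T \ {x})) = w y + setWeight w (T \ {x}) :=
    setWeight_insert w hyTx (hTfin.diff)
  have h2 : setWeight w T = w x + setWeight w (T \ {x}) :=
    setWeight_eq_add_diff w hx hTfin
  have hwx : w x = a := by simp [hwdef]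
  have hwy : w y = b := by simp [hwdef, hxy.symm]
  rw [h1, h2, hwx, hwy] at hle
  linarith

lemma no_UOB_of_bad_circuit (hE : M.E.Finite) (hA : IsAreaFun M A)
    (he : e ∈ M.E) (hunc : ¬ Certain A e) (hC : (minorAt M A e).IsCircuit' C) (heC : e ∈ C)
    (hg : g ∈ C) (hgmb : g ∈ midSet M A e ∪ bothSet M A e) :
    ¬ ∃ T, IsUOB M A T := by
  rintro ⟨T, hT⟩
  obtain ⟨hAe, hbbE, hbaE⟩ := hA e he
  have hge : g ≠ e := by
    rintro rfl
    rcases hgmb with h1 | h1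
    · exact h1.2.1 rfl
    · exact h1.2.1 rfl
  have hne : C ≠ {e} := fun hc => hge (by simpa [hc] using hg)
  obtain ⟨w0, hw0⟩ : ∃ w0, Realization M A w0 := by
    classical
    exact ⟨fun z => if hz : z ∈ M.E then (hA z hz).1.some else 0,
      fun z hz => by simpa [hz] using (hA z hz).1.some_mem⟩
  have hTb : M.IsBase T := (hT w0 hw0).1
  obtain ⟨J, hJ⟩ := M.exists_isBasis (lowSet M A e) lowSet_subset_ground
  by_cases heT : e ∈ T
  · -- case e ∈ T
    have hecl : e ∈ M.closure ((C \ {e}) ∪ lowSet M A e) :=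
      minorAt_circuit_closure hE hJ hC heC
    have hnot : ¬ ((C \ {e}) ∪ lowSet M A e ⊆ M.closure (T \ {e})) := by
      intro hsub
      have h1 : M.closure ((C \ {e}) ∪ lowSet M A e) ⊆ M.closure (T \ {e}) :=
        M.closure_subset_closure_of_subset_closure hsub
      exact (hTb.indep.notMem_closure_diff_of_mem heT) (h1 hecl)
    obtain ⟨f, hfmem, hfcl⟩ := not_subset.1 hnot
    have hfe : f ≠ e := by
      rcases hfmem with h1 | h1
      · exact h1.2
      · exact h1.2.1
    have hfE : f ∈ M.E := by
      rcases hfmem with h1 | h1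
      · exact (hC.subset_ground h1.1).1.1
      · exact h1.1
    have hfT : f ∉ T := by
      intro hfT
      exact hfcl (M.mem_closure_of_mem ⟨hfT, hfe⟩
        (diff_subset.trans hTb.subset_ground))
    have hbase := base_exchange_of_not_mem_closure hTb heT hfE hfcl
    -- find values a ∈ A e, b ∈ A f with b < a
    obtain ⟨b, hbAf, hblt⟩ : ∃ b ∈ A f, b < sSup (A e) := by
      rcases hfmem with h1 | h1
      · rcases mem_mid_or_both_of_mem_minorAt_ground hA he hunc (hC.subset_ground h1.1)
          hfe with h2 | h2
        · obtain ⟨v, hv1, hv2⟩ := h2.2.2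
          exact ⟨v, hv1, hv2.2⟩
        · obtain ⟨v, hv1, hv2⟩ := h2.2.2.2.1
          exact ⟨v, hv1, lt_of_le_of_lt hv2 (uncertain_inf_lt_sup hA he hunc)⟩
      · obtain ⟨hfE', hne', hsup⟩ := h1
        obtain ⟨v, hv⟩ := (hA f hfE).1
        refine ⟨v, hv, ?_⟩
        have := le_csSup (hA f hfE).2.2 hv
        exact lt_of_le_of_lt (this.trans hsup) (uncertain_inf_lt_sup hA he hunc)
    obtain ⟨a, haAe, halt⟩ := exists_lt_of_lt_csSup hAe hblt
    exact hT.no_swap hE hA hTb heT hfE hfT hbase haAe hbAf halt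
  · -- case e ∉ T
    have hdep : M.Dep (insert e T) := hTb.insert_dep ⟨he, heT⟩
    obtain ⟨C', hC'sub, hC'⟩ := exists_isCircuit_subset hE hdep
    have heC' : e ∈ C' := by
      by_contra heC'
      exact hC'.1.not_indep (hTb.indep.subset
        (fun z hz => (hC'sub hz).resolve_left (fun hzc => heC' (hzc ▸ hz))))
    have hnotlow : ¬ (C' \ {e} ⊆ lowSet M A e) := by
      intro hsub
      have h1 : e ∈ M.closure (lowSet M A e) :=
        (M.closure_subset_closure hsub) (hC'.mem_closure_diff_singleton heC')
      exact (not_closure_low_of_minorAt_circuit hE hJ hC heC hne) h1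
    obtain ⟨hh, hhmem, hhlow⟩ := not_subset.1 hnotlow
    have hhe : hh ≠ e := hhmem.2
    have hhT : hh ∈ T := (hC'sub hhmem.1).resolve_left hhe
    have hhE : hh ∈ M.E := hTb.subset_ground hhT
    have hbase := exchange_base_of_circuit hTb heT hC' hC'sub hhmem.1 hhe
    -- values : a ∈ A hh with sInf (A e) < a, then b ∈ A e with b < a
    have hsup : sInf (A e) < sSup (A hh) := by
      by_contra hc
      push_neg at hc
      exact hhlow ⟨hhE, hhe, hc⟩
    obtain ⟨a, haAh, halt⟩ := exists_lt_of_lt_csSup (hA hh hhE).1 hsup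
    obtain ⟨b, hbAe, hblt⟩ := exists_lt_of_csInf_lt hAe halt
    exact hT.no_swap hE hA hTb hhT he heT hbase haAh hbAe hblt

end NoUOB


section Infeasible

variable {M : Matroid α} {A : α → Set ℝ} {C G T : Set α} {e f g : α}

lemma not_feasible_of_bad_circuit (hE : M.E.Finite) (hA : IsAreaFun M A)
    (he : e ∈ M.E) (hunc : ¬ Certain A e) (hGE : G ⊆ M.E) (heG : e ∉ G)
    (hC : (minorAt M A e).IsCircuit' C) (heC : e ∈ C)
    (hg : g ∈ C) (hgmb : g ∈ midSet M A e ∪ (bothSet M A e \ G)) :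
    ¬ FeasibleQuery M A G := by
  classical
  rintro ⟨-, hfeas⟩
  have hlu := uncertain_inf_lt_sup hA he hunc
  -- choose revealed values
  have hpick : ∀ f, ∃ v, f ∈ G → (v ∈ A f ∧
      ((f ∈ bothSet M A e ∧ f ∈ C) → v ≤ sInf (A e)) ∧
      ((f ∈ bothSet M A e ∧ f ∉ C) → sSup (A e) ≤ v) ∧
      (f ∈ midSet M A e → v ∈ Set.Ioo (sInf (A e)) (sSup (A e)))) := by
    intro f
    by_cases hfG : f ∈ G
    swap
    · exact ⟨0, fun hc => absurd hc hfG⟩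
    by_cases h1 : f ∈ bothSet M A e
    · by_cases h2 : f ∈ C
      · obtain ⟨v, hv1, hv2⟩ := h1.2.2.2.1
        exact ⟨v, fun _ => ⟨hv1, fun _ => hv2, fun hcc => absurd h2 hcc.2,
          fun hm => absurd hm h1.2.2.1⟩⟩
      · obtain ⟨v, hv1, hv2⟩ := h1.2.2.2.2
        exact ⟨v, fun _ => ⟨hv1, fun hcc => absurd hcc.2 h2, fun _ => hv2,
          fun hm => absurd hm h1.2.2.1⟩⟩
    · by_cases h3 : f ∈ midSet M A e
      · obtain ⟨v, hv1, hv2⟩ := h3.2.2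
        exact ⟨v, fun _ => ⟨hv1, fun hcc => absurd hcc.1 h1, fun hcc => absurd hcc.1 h1,
          fun _ => hv2⟩⟩
      · obtain ⟨v, hv⟩ := (hA f (hGE hfG)).1
        exact ⟨v, fun _ => ⟨hv, fun hcc => absurd hcc.1 h1, fun hcc => absurd hcc.1 h1,
          fun hm => absurd hm h3⟩⟩
  choose r hr using hpick
  set B : α → Set ℝ := fun f => if f ∈ G then {r f} else A f with hBdef
  have hrev : IsRevelation M A G B := by
    refine ⟨fun f hf => ⟨r f, (hr f hf).1, by simp [hBdef, hf]⟩, fun f hf => by simp [hBdef, hf]⟩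
  obtain ⟨T, hTuob⟩ := hfeas B hrev
  have hBe : B e = A e := by simp [hBdef, heG]
  have hLe : sInf (B e) = sInf (A e) := by rw [hBe]
  have hUe : sSup (B e) = sSup (A e) := by rw [hBe]
  have hBA : IsAreaFun M B := by
    intro f hf
    by_cases hfG : f ∈ G
    · refine ⟨?_, ?_, ?_⟩ <;> simp [hBdef, hfG]
    · have h1 := hA f hf
      simpa [hBdef, hfG] using h1
  have hBunc : ¬ Certain B e := by
    intro ⟨v, hv⟩
    exact hunc ⟨v, by rwa [hBe] at hv⟩
  set K : Set α := G ∩ bothSet M A e ∩ C with hKdef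
  set Kh : Set α := (G ∩ bothSet M A e) \ C with hKhdef
  -- low/high sets of the revealed instance
  have hBf_sing : ∀ f ∈ G, B f = {r f} := fun f hf => by simp [hBdef, hf]
  have hBf_id : ∀ f ∉ G, B f = A f := fun f hf => by simp [hBdef, hf]
  have hlowB : lowSet M B e = lowSet M A e ∪ K := by
    apply Subset.antisymm
    · rintro f ⟨hfE, hfe, hfsup⟩
      rw [hLe] at hfsup
      by_cases hfG : f ∈ G
      · rw [hBf_sing f hfG] at hfsup
        simp only [csSup_singleton] at hfsup
        rcases classify hA he hunc hfE hfe with h1 | h1 | h1 | h1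
        · exact Or.inl h1
        · exfalso
          have h2 := csInf_le (hA f hfE).2.1 (hr f hfG).1
          exact absurd ((h1.2.2.trans h2).trans hfsup) (not_le.2 hlu)
        · exfalso
          have h2 := (hr f hfG).2.2.2 h1
          exact absurd (h2.1.trans_le hfsup) (lt_irrefl _)
        · by_cases hfC : f ∈ C
          · exact Or.inr ⟨⟨hfG, h1⟩, hfC⟩
          · exfalso
            have h2 := (hr f hfG).2.2.1 ⟨h1, hfC⟩
            exact absurd ((hlu.trans_le h2).trans_le hfsup) (lt_irrefl _)
      · rw [hBf_id f hfG] at hfsup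
        exact Or.inl ⟨hfE, hfe, hfsup⟩
    · rintro f (⟨hfE, hfe, hfsup⟩ | ⟨⟨hfG, hfboth⟩, hfC⟩)
      · refine ⟨hfE, hfe, ?_⟩
        rw [hLe]
        by_cases hfG : f ∈ G
        · rw [hBf_sing f hfG]
          simp only [csSup_singleton]
          exact (le_csSup (hA f hfE).2.2 (hr f hfG).1).trans hfsup
        · rwa [hBf_id f hfG]
      · refine ⟨hfboth.1, hfboth.2.1, ?_⟩
        rw [hLe, hBf_sing f hfG]
        simp only [csSup_singleton]
        exact (hr f hfG).2.1 ⟨hfboth, hfC⟩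
  have hhighB : highSet M B e = highSet M A e ∪ Kh := by
    apply Subset.antisymm
    · rintro f ⟨hfE, hfe, hfinf⟩
      rw [hUe] at hfinf
      by_cases hfG : f ∈ G
      · rw [hBf_sing f hfG] at hfinf
        simp only [csInf_singleton] at hfinf
        rcases classify hA he hunc hfE hfe with h1 | h1 | h1 | h1
        · exfalso
          have h2 := le_csSup (hA f hfE).2.2 (hr f hfG).1
          exact absurd (hfinf.trans (h2.trans h1.2.2)) (not_le.2 hlu)
        · exact Or.inl h1
        · exfalso
          have h2 := (hr f hfG).2.2.2 h1
          exact absurd (hfinf.trans_lt h2.2) (lt_irrefl _)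
        · by_cases hfC : f ∈ C
          · exfalso
            have h2 := (hr f hfG).2.1 ⟨h1, hfC⟩
            exact absurd ((hfinf.trans h2).trans_lt hlu) (lt_irrefl _)
          · exact Or.inr ⟨⟨hfG, h1⟩, hfC⟩
      · rw [hBf_id f hfG] at hfinf
        exact Or.inl ⟨hfE, hfe, hfinf⟩
    · rintro f (⟨hfE, hfe, hfinf⟩ | ⟨⟨hfG, hfboth⟩, hfC⟩)
      · refine ⟨hfE, hfe, ?_⟩
        rw [hUe]
        by_cases hfG : f ∈ G
        · rw [hBf_sing f hfG]
          simp only [csInf_singleton]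
          exact hfinf.trans (csInf_le (hA f hfE).2.1 (hr f hfG).1)
        · rwa [hBf_id f hfG]
      · refine ⟨hfboth.1, hfboth.2.1, ?_⟩
        rw [hUe, hBf_sing f hfG]
        simp only [csInf_singleton]
        exact (hr f hfG).2.2.1 ⟨hfboth, hfC⟩
  obtain ⟨J₀, hJ₀⟩ := M.exists_isBasis (lowSet M A e) lowSet_subset_ground
  set C₂ : Set α := C \ K with hC₂def
  have hKC : K ⊆ C \ {e} := by
    rintro z ⟨⟨hzG, hzb⟩, hzC⟩
    exact ⟨hzC, fun hz => not_mem_bothSet_self ((mem_singleton_iff.1 hz) ▸ hzb)⟩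
  have hCe_indep : (minorAt M A e).Indep (C \ {e}) := hC.diff_singleton_indep heC
  have hCeJ : M.Indep ((C \ {e}) ∪ J₀) := minorAt_indep_union_indep hE hJ₀ hCe_indep
  have hJ₁ind : M.Indep (K ∪ J₀) := hCeJ.subset (union_subset_union_left _ hKC)
  have hlowBE : lowSet M A e ∪ K ⊆ M.E := by
    rintro z (hz | hz)
    · exact hz.1
    · exact hz.1.2.1
  have hJ₁ : M.IsBasis (K ∪ J₀) (lowSet M B e) := by
    rw [hlowB]
    refine hJ₁ind.isBasis_of_subset_of_subset_closure
      (union_subset subset_union_right (hJ₀.subset.trans subset_union_left)) ?_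
    rintro z (hz | hz)
    · exact M.closure_subset_closure subset_union_right (hJ₀.subset_closure hz)
    · exact (M.subset_closure _ hJ₁ind.subset_ground) (Or.inl hz)
  have hC₂sub : C₂ ⊆ (minorAt M B e).E := by
    rintro z ⟨hzC, hzK⟩
    have hz1 := hC.subset_ground hzC
    refine ⟨⟨hz1.1.1, ?_⟩, ?_⟩
    · rw [hlowB]
      rintro (h1 | h1)
      · exact hz1.1.2 h1
      · exact hzK h1
    · rw [hhighB]
      rintro (h1 | h1)
      · exact hz1.2 h1
      · exact h1.2 hzC
  have heC₂ : e ∈ C₂ := ⟨heC, fun hc => not_mem_bothSet_self hc.1.2⟩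
  have hC₂circ : (minorAt M B e).IsCircuit' C₂ := by
    constructor
    · rw [dep_iff]
      refine ⟨fun hind => ?_, hC₂sub⟩
      have h2 : M.Indep (C₂ ∪ (K ∪ J₀)) := minorAt_indep_union_indep hE hJ₁ hind
      have h3 : C ∪ J₀ ⊆ C₂ ∪ (K ∪ J₀) := by
        rintro z (hz | hz)
        · by_cases hzK : z ∈ K
          · exact Or.inr (Or.inl hzK)
          · exact Or.inl ⟨hz, hzK⟩
        · exact Or.inr (Or.inr hz)
      exact minorAt_circuit_not_indep_union hE hJ₀ hC (h2.subset h3)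
    · intro D hD
      have hDKC : D ∪ K ⊂ C := by
        refine ⟨union_subset (hD.subset.trans diff_subset) (hKC.trans diff_subset),
          fun hsub => ?_⟩
        obtain ⟨z, hzC₂, hzD⟩ := exists_of_ssubset hD
        rcases hsub hzC₂.1 with h1 | h1
        · exact hzD h1
        · exact hzC₂.2 h1
      have h4 : (minorAt M A e).Indep (D ∪ K) := hC.2 _ hDKC
      have h5 : M.Indep ((D ∪ K) ∪ J₀) := minorAt_indep_union_indep hE hJ₀ h4
      refine minorAt_indep_of_indep_union hE hJ₁ (hD.subset.trans hC₂sub) ?_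
      rwa [union_assoc] at h5
  have hgC₂ : g ∈ C₂ := by
    refine ⟨hg, ?_⟩
    rintro ⟨⟨hgG, hgboth⟩, -⟩
    rcases hgmb with h1 | h1
    · exact hgboth.2.2.1 h1
    · exact h1.2 hgG
  have hgmbB : g ∈ midSet M B e ∪ bothSet M B e := by
    rcases hgmb with h1 | h1
    · by_cases hgG : g ∈ G
      · refine Or.inl ⟨h1.1, h1.2.1, ?_⟩
        rw [hBf_sing g hgG, hLe, hUe]
        exact ⟨r g, rfl, (hr g hgG).2.2.2 h1⟩
      · refine Or.inl ⟨h1.1, h1.2.1, ?_⟩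
        rw [hBf_id g hgG, hLe, hUe]
        exact h1.2.2
    · obtain ⟨⟨hgE, hgne, hgnm, hIic, hIci⟩, hgG⟩ := h1
      refine Or.inr ⟨hgE, hgne, ?_, ?_, ?_⟩
      · rintro ⟨-, -, hmem⟩
        rw [hBf_id g hgG, hLe, hUe] at hmem
        exact hgnm ⟨hgE, hgne, hmem⟩
      · rw [hBf_id g hgG, hLe]
        exact hIic
      · rw [hBf_id g hgG, hUe]
        exact hIci
  exact no_UOB_of_bad_circuit hE hBA he hBunc hC₂circ heC₂ hgC₂ hgmbB ⟨T, hTuob⟩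

end Infeasible

section ExistsUOB

variable {M : Matroid α} {A : α → Set ℝ} {T : Set α} {e f x y : α}

lemma not_high_of_mid (hA : IsAreaFun M A) (hf : f ∈ midSet M A e) : f ∉ highSet M A e := by
  obtain ⟨v, hv1, hv2⟩ := hf.2.2
  intro hc
  exact absurd ((hc.2.2.trans (csInf_le (hA f hf.1).2.1 hv1)).trans_lt hv2.2) (lt_irrefl _)

lemma not_high_of_both (hA : IsAreaFun M A) (he : e ∈ M.E) (hunc : ¬ Certain A e)
    (hf : f ∈ bothSet M A e) : f ∉ highSet M A e := by
  obtain ⟨p, hp1, hp2⟩ := hf.2.2.2.1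
  intro hc
  have hlu := uncertain_inf_lt_sup hA he hunc
  have hp2' : p ≤ sInf (A e) := hp2
  have h1 : sInf (A f) ≤ p := csInf_le (hA f hf.1).2.1 hp1
  have h2 := hc.2.2
  linarith

lemma isMinBasis_of_local (hE : M.E.Finite) {w : α → ℝ} (hT : M.IsBase T)
    (hloc : ∀ x ∈ T, ∀ y ∈ M.E, y ∉ T → M.IsBase (insert y (T \ {x})) → w x ≤ w y) :
    IsMinBasis M w T := by
  refine ⟨hT, ?_⟩
  have key : ∀ n B, M.IsBase B → (T \ B).ncard = n → setWeight w T ≤ setWeight w B := by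
    intro n
    induction n using Nat.strong_induction_on with
    | _ n ih =>
      intro B hB hn
      by_cases hTB : T ⊆ B
      · rw [hT.eq_of_subset_isBase hB hTB]
      obtain ⟨x, hxT, hxB⟩ := not_subset.1 hTB
      have hxE : x ∈ M.E := hT.subset_ground hxT
      have hdep : M.Dep (insert x B) := hB.insert_dep ⟨hxE, hxB⟩
      obtain ⟨Cx, hCsub, hCx⟩ := exists_isCircuit_subset hE hdep
      have hxC : x ∈ Cx := by
        by_contra hxC
        exact hCx.1.not_indep (hB.indep.subset
          (fun z hz => (hCsub hz).resolve_left (fun hc => hxC (hc ▸ hz))))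
      have hxcl : x ∉ M.closure (T \ {x}) := hT.indep.notMem_closure_diff_of_mem hxT
      have hnot : ¬ (Cx \ {x} ⊆ M.closure (T \ {x})) := by
        intro hsub
        exact hxcl ((M.closure_subset_closure_of_subset_closure hsub)
          (hCx.mem_closure_diff_singleton hxC))
      obtain ⟨y, hymem, hycl⟩ := not_subset.1 hnot
      have hyB : y ∈ B := (hCsub hymem.1).resolve_left hymem.2
      have hyT : y ∉ T := by
        intro hyT
        exact hycl (M.mem_closure_of_mem ⟨hyT, hymem.2⟩ (diff_subset.trans hT.subset_ground))
      have hyE : y ∈ M.E := hB.subset_ground hyB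
      have hTbase : M.IsBase (insert y (T \ {x})) := base_exchange_of_not_mem_closure hT hxT hyE hycl
      have hwxy : w x ≤ w y := hloc x hxT y hyE hyT hTbase
      have hB'base : M.IsBase (insert x (B \ {y})) :=
        exchange_base_of_circuit hB hxB hCx hCsub hymem.1
          (fun hc => hxB ((mem_singleton_iff.1 hc) ▸ hyB))
      have hTB' : T \ (insert x (B \ {y})) = (T \ B) \ {x} := by
        ext z
        by_cases hzy : z = y
        · subst hzy
          simp [hyT]
        · simp only [mem_diff, mem_insert_iff, mem_singleton_iff, not_or, not_and, not_not]
          constructor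
          · rintro ⟨hzT, hzx, hzB⟩
            exact ⟨⟨hzT, fun hc => hzy (hzB hc)⟩, hzx⟩
          · rintro ⟨⟨hzT, hzB⟩, hzx⟩
            exact ⟨hzT, hzx, fun hc => absurd hc hzB⟩
      have hcard : ((T \ B) \ {x}).ncard < n := by
        rw [← hn]
        exact ncard_lt_ncard ⟨diff_subset, fun hsub => (hsub ⟨hxT, hxB⟩).2 rfl⟩
          ((hE.subset hT.subset_ground).diff)
      have hIH := ih _ hcard _ hB'base (by rw [hTB'])
      have hBfin : B.Finite := hE.subset hB.subset_ground
      have hxBy : x ∉ B \ {y} := fun hc => hxB hc.1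
      have h1 : setWeight w (insert x (B \ {y})) = w x + setWeight w (B \ {y}) :=
        setWeight_insert w hxBy (hBfin.diff)
      have h2 : setWeight w B = w y + setWeight w (B \ {y}) :=
        setWeight_eq_add_diff w hyB hBfin
      calc setWeight w T ≤ setWeight w (insert x (B \ {y})) := hIH
        _ ≤ setWeight w B := by rw [h1, h2]; linarith
  intro B hB
  exact key _ B hB rfl

lemma blue_of_not_red (hE : M.E.Finite) (hA : IsAreaFun M A) (he : e ∈ M.E)
    (hunc : ¬ Certain A e)
    (hyp : ∀ C, (minorAt M A e).IsCircuit' C → e ∈ C → C = {e})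
    (hnotred : e ∉ M.closure (lowSet M A e)) :
    e ∉ M.closure (lowSet M A e ∪ midSet M A e ∪ bothSet M A e) := by
  intro hcl
  obtain ⟨J₀, hJ₀⟩ := M.exists_isBasis (lowSet M A e) lowSet_subset_ground
  have hsubE : lowSet M A e ∪ midSet M A e ∪ bothSet M A e ⊆ M.E := by
    rintro z ((hz | hz) | hz)
    exacts [hz.1, hz.1, hz.1]
  obtain ⟨Jm, hJm, hJ₀Jm⟩ := hJ₀.indep.subset_isBasis_of_subset
    (hJ₀.subset.trans (subset_union_left.trans subset_union_left)) hsubE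
  have hJmlow : Jm ∩ lowSet M A e = J₀ :=
    (hJ₀.eq_of_subset_indep (hJm.indep.inter_right _)
      (subset_inter hJ₀Jm hJ₀.subset) inter_subset_right).symm
  have heJm : e ∉ Jm := by
    intro hc
    rcases hJm.subset hc with (h1 | h1) | h1
    exacts [not_mem_lowSet_self h1, not_mem_midSet_self h1, not_mem_bothSet_self h1]
  have hdep : M.Dep (insert e Jm) := by
    rw [hJm.indep.insert_dep_iff]
    exact ⟨by rwa [hJm.closure_eq_closure], heJm⟩
  obtain ⟨Cx, hCsub, hCx⟩ := exists_isCircuit_subset hE hdep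
  have heCx : e ∈ Cx := by
    by_contra hc
    exact hCx.1.not_indep (hJm.indep.subset
      (fun z hz => (hCsub hz).resolve_left (fun h => hc (h ▸ hz))))
  set C₀ := Cx \ lowSet M A e with hC₀
  have hCxsub : Cx ⊆ C₀ ∪ J₀ := by
    intro z hz
    by_cases hzl : z ∈ lowSet M A e
    · refine Or.inr ?_
      rw [← hJmlow]
      rcases hCsub hz with h1 | h1
      · exact absurd ((mem_singleton_iff.1 h1) ▸ hzl) not_mem_lowSet_self
      · exact ⟨h1, hzl⟩
    · exact Or.inl ⟨hz, hzl⟩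
  have hC₀ground : C₀ ⊆ (minorAt M A e).E := by
    rintro z ⟨hzC, hzl⟩
    refine ⟨⟨hCx.subset_ground hzC, hzl⟩, ?_⟩
    rcases hCsub hzC with h1 | h1
    · rw [mem_singleton_iff.1 h1]
      exact not_mem_highSet_self
    · rcases hJm.subset h1 with (h2 | h2) | h2
      · exact absurd h2 hzl
      · exact not_high_of_mid hA h2
      · exact not_high_of_both hA he hunc h2
  have hC₀dep : ¬ (minorAt M A e).Indep C₀ := by
    intro hind
    have h2 := minorAt_indep_union_indep hE hJ₀ hind
    exact hCx.1.not_indep (h2.subset hCxsub)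
  have hEN : (minorAt M A e).E.Finite := hE.subset (diff_subset.trans diff_subset)
  obtain ⟨C₁, hC₁sub, hC₁⟩ := exists_isCircuit_subset hEN ⟨hC₀dep, hC₀ground⟩
  by_cases heC₁ : e ∈ C₁
  · have heq := hyp C₁ hC₁ heC₁
    have hdep1 : ¬ (minorAt M A e).Indep {e} := heq ▸ hC₁.1.not_indep
    apply hnotred
    have hnu : ¬ M.Indep (insert e J₀) := by
      intro hind
      refine hdep1 (minorAt_indep_of_indep_union hE hJ₀
        (singleton_subset_iff.2 (mem_minorAt_ground he)) ?_)
      rwa [singleton_union]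
    have hcl2 : e ∈ M.closure J₀ := by
      by_contra hc
      refine hnu ?_
      rw [hJ₀.indep.insert_indep_iff_of_notMem
        (fun h => not_mem_lowSet_self (hJ₀.subset h))]
      exact ⟨he, hc⟩
    rwa [hJ₀.closure_eq_closure] at hcl2
  · have hC₁sub2 : C₁ ⊆ Jm \ lowSet M A e := by
      intro z hz
      have hz0 := hC₁sub hz
      rcases hCsub hz0.1 with h1 | h1
      · exact absurd ((mem_singleton_iff.1 h1) ▸ hz) heC₁
      · exact ⟨h1, hz0.2⟩
    have hind : (minorAt M A e).Indep (Jm \ lowSet M A e) := by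
      refine minorAt_indep_of_indep_union hE hJ₀ ?_ ?_
      · rintro z ⟨hzJm, hzl⟩
        refine ⟨⟨hsubE (hJm.subset hzJm), hzl⟩, ?_⟩
        rcases hJm.subset hzJm with (h2 | h2) | h2
        · exact absurd h2 hzl
        · exact not_high_of_mid hA h2
        · exact not_high_of_both hA he hunc h2
      · have heq2 : (Jm \ lowSet M A e) ∪ J₀ = Jm := by
          apply Subset.antisymm
          · exact union_subset diff_subset hJ₀Jm
          · intro z hz
            by_cases hzl : z ∈ lowSet M A e
            · exact Or.inr (by rw [← hJmlow]; exact ⟨hz, hzl⟩)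
            · exact Or.inl ⟨hz, hzl⟩
        rw [heq2]
        exact hJm.indep
    exact hC₁.1.not_indep (hind.subset hC₁sub2)

end ExistsUOB

section ExistsUOB2

variable {M : Matroid α} {A : α → Set ℝ} {T : Set α} {e f x y : α}

lemma exists_UOB (hE : M.E.Finite) (hA : IsAreaFun M A)
    (hyp : ∀ e ∈ M.E, ¬ Certain A e → ∀ C, (minorAt M A e).IsCircuit' C → e ∈ C → C = {e}) :
    ∃ T, IsUOB M A T := by
  classical
  set wL : α → ℝ := fun z => sInf (A z) with hwL
  set wU : α → ℝ := fun z => sSup (A z) with hwU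
  have hfin : {B | M.IsBase B}.Finite :=
    hE.finite_subsets.subset (fun B hB => hB.subset_ground)
  obtain ⟨B₀, hB₀⟩ := M.exists_isBase
  obtain ⟨T₁, hT₁, hmin1⟩ := Set.exists_min_image _ (setWeight wL) hfin ⟨B₀, hB₀⟩
  have hSfin : {B | M.IsBase B ∧ setWeight wL B = setWeight wL T₁}.Finite :=
    hfin.subset (fun B hB => hB.1)
  obtain ⟨T, hTmem, hmin2⟩ := Set.exists_min_image _ (setWeight wU) hSfin ⟨T₁, hT₁, rfl⟩
  obtain ⟨hTb, hTw1⟩ := hTmem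
  have hTfin : T.Finite := hE.subset hTb.subset_ground
  have hkey : ∀ x ∈ T, ∀ y, y ∉ T → M.IsBase (insert y (T \ {x})) →
      wL x ≤ wL y ∧ (wL y ≤ wL x → wU x ≤ wU y) := by
    intro x hx y hyT hbase
    have hyTx : y ∉ T \ {x} := fun hc => hyT hc.1
    have hL1 : setWeight wL T ≤ setWeight wL (insert y (T \ {x})) := by
      rw [hTw1]
      exact hmin1 _ hbase
    rw [setWeight_insert wL hyTx (hTfin.diff), setWeight_eq_add_diff wL hx hTfin] at hL1
    refine ⟨by linarith, fun htie => ?_⟩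
    have hL2 : setWeight wL (insert y (T \ {x})) = setWeight wL T₁ := by
      rw [setWeight_insert wL hyTx (hTfin.diff), ← hTw1, setWeight_eq_add_diff wL hx hTfin]
      have heq : wL y = wL x := le_antisymm htie (by linarith)
      rw [heq]
    have hU1 : setWeight wU T ≤ setWeight wU (insert y (T \ {x})) :=
      hmin2 (insert y (T \ {x})) ⟨hbase, hL2⟩
    rw [setWeight_insert wU hyTx (hTfin.diff), setWeight_eq_add_diff wU hx hTfin] at hU1
    linarith
  have hswap : ∀ x ∈ T, ∀ y ∈ M.E, y ∉ T → M.IsBase (insert y (T \ {x})) →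
      sSup (A x) ≤ sInf (A y) := by
    intro x hx y hyE hyT hbase
    have hxE : x ∈ M.E := hTb.subset_ground hx
    obtain ⟨hLxy, htie⟩ := hkey x hx y hyT hbase
    by_cases hcert : Certain A x
    · obtain ⟨rx, hrx⟩ := hcert
      have h1 : sSup (A x) = sInf (A x) := by rw [hrx]; simp
      exact h1.le.trans hLxy
    · have hunc := hcert
      have hlu := uncertain_inf_lt_sup hA hxE hunc
      by_cases hred : x ∈ M.closure (lowSet M A x)
      · exfalso
        have hxcl : x ∉ M.closure (T \ {x}) := hTb.indep.notMem_closure_diff_of_mem hx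
        have hnot : ¬ (lowSet M A x ⊆ M.closure (T \ {x})) := fun hsub =>
          hxcl ((M.closure_subset_closure_of_subset_closure hsub) hred)
        obtain ⟨g, hgmem, hgcl⟩ := not_subset.1 hnot
        have hgT : g ∉ T := by
          intro hgT
          exact hgcl (M.mem_closure_of_mem ⟨hgT, hgmem.2.1⟩
            (diff_subset.trans hTb.subset_ground))
        have hbase2 := base_exchange_of_not_mem_closure hTb hx hgmem.1 hgcl
        obtain ⟨hL2, htie2⟩ := hkey x hx g hgT hbase2
        have h3 := csInf_le_csSup (hA g hgmem.1).1 (hA g hgmem.1).2.1 (hA g hgmem.1).2.2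
        have hg1 : wL g ≤ wL x := h3.trans hgmem.2.2
        have hg2 := htie2 hg1
        have h4 : sSup (A g) ≤ sInf (A x) := hgmem.2.2
        simp only [hwU] at hg2
        linarith
      · have hblue := blue_of_not_red hE hA hxE hunc (hyp x hxE hunc) hred
        have hyne : y ≠ x := fun hc => hyT (hc ▸ hx)
        have hmidboth : ∀ _hy : y ∈ midSet M A x ∪ bothSet M A x, False := by
          intro hymb
          have hdep : M.Dep (insert y T) := hTb.insert_dep ⟨hyE, hyT⟩
          obtain ⟨C', hC'sub, hC'⟩ := exists_isCircuit_subset hE hdep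
          have hxC' : x ∈ C' := by
            by_contra hxC'
            refine hC'.1.not_indep (hbase.indep.subset ?_)
            intro z hz
            rcases hC'sub hz with h1 | h1
            · exact (mem_singleton_iff.1 h1) ▸ mem_insert _ _
            · exact mem_insert_of_mem _ ⟨h1, fun hzx => hxC' ((mem_singleton_iff.1 hzx) ▸ hz)⟩
          have hhigh : ∃ h', h' ∈ C' ∧ h' ∈ highSet M A x := by
            by_contra hno
            push_neg at hno
            apply hblue
            have hsub2 : C' \ {x} ⊆ lowSet M A x ∪ midSet M A x ∪ bothSet M A x := by
              rintro z ⟨hzC, hzx⟩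
              have hzE : z ∈ M.E := hC'.subset_ground hzC
              rcases classify hA hxE hunc hzE hzx with h2 | h2 | h2 | h2
              · exact Or.inl (Or.inl h2)
              · exact absurd h2 (hno z hzC)
              · exact Or.inl (Or.inr h2)
              · exact Or.inr h2
            exact (M.closure_subset_closure hsub2) (hC'.mem_closure_diff_singleton hxC')
          obtain ⟨h', hh'C, hh'high⟩ := hhigh
          have hh'y : h' ≠ y := by
            intro hc
            subst hc
            rcases hymb with h2 | h2
            · exact (not_high_of_mid hA h2) hh'high
            · exact (not_high_of_both hA hxE hunc h2) hh'high
          have hh'T : h' ∈ T := by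
            rcases hC'sub hh'C with h1 | h1
            · exact absurd (mem_singleton_iff.1 h1) hh'y
            · exact h1
          have hbase3 := exchange_base_of_circuit hTb hyT hC' hC'sub hh'C hh'y
          obtain ⟨hL3, -⟩ := hkey h' hh'T y hyT hbase3
          have h6 : sSup (A x) ≤ sInf (A h') := hh'high.2.2
          simp only [hwL] at hL3
          rcases hymb with h2 | h2
          · obtain ⟨v, hv1, hv2⟩ := h2.2.2
            have h7 : sInf (A y) ≤ v := csInf_le (hA y hyE).2.1 hv1
            have h8 : v < sSup (A x) := hv2.2
            linarith
          · obtain ⟨p, hp1, hp2⟩ := h2.2.2.2.1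
            have h7 : sInf (A y) ≤ p := csInf_le (hA y hyE).2.1 hp1
            have hp2' : p ≤ sInf (A x) := hp2
            linarith
        rcases classify hA hxE hunc hyE hyne with hy | hy | hy | hy
        · exfalso
          have h3 := csInf_le_csSup (hA y hyE).1 (hA y hyE).2.1 (hA y hyE).2.2
          have hyL : wL y ≤ wL x := h3.trans hy.2.2
          have h4 := htie hyL
          simp only [hwU] at h4
          have h5 : sSup (A y) ≤ sInf (A x) := hy.2.2
          linarith
        · exact hy.2.2
        · exact absurd (Or.inl hy) (fun hc => hmidboth hc)
        · exact absurd (Or.inr hy) (fun hc => hmidboth hc)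
  refine ⟨T, fun w hw => isMinBasis_of_local hE hTb (fun x hx y hyE hyT hbase => ?_)⟩
  have hxE := hTb.subset_ground hx
  have h1 : w x ≤ sSup (A x) := le_csSup (hA x hxE).2.2 (hw x hxE)
  have h2 : sInf (A y) ≤ w y := csInf_le (hA y hyE).2.1 (hw y hyE)
  linarith [hswap x hx y hyE hyT hbase]

end ExistsUOB2

section Feasible

variable {M : Matroid α} {A : α → Set ℝ} {C J K : Set α} {e f x y : α}

lemma not_low_of_mid (hA : IsAreaFun M A) (hf : f ∈ midSet M A e) : f ∉ lowSet M A e := by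
  obtain ⟨v, hv1, hv2⟩ := hf.2.2
  intro hc
  exact absurd ((le_csSup (hA f hf.1).2.2 hv1).trans hc.2.2) (not_le.2 hv2.1)

lemma not_low_of_both (hA : IsAreaFun M A) (he : e ∈ M.E) (hunc : ¬ Certain A e)
    (hf : f ∈ bothSet M A e) : f ∉ lowSet M A e := by
  obtain ⟨q, hq1, hq2⟩ := hf.2.2.2.2
  intro hc
  have hlu := uncertain_inf_lt_sup hA he hunc
  have hq2' : sSup (A e) ≤ q := hq2
  have h1 : q ≤ sSup (A f) := le_csSup (hA f hf.1).2.2 hq1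
  have h2 := hc.2.2
  linarith

lemma not_con_indep_circuit_diff (hE : M.E.Finite) (hJ : M.IsBasis J K)
    (hC : M.IsCircuit' C) (he : e ∈ C) (heK : e ∉ K) : ¬ (M.con K).Indep (C \ K) := by
  intro hind
  have heJ : e ∉ J := fun hc => heK (hJ.subset hc)
  obtain ⟨-, hindu⟩ := (hJ.con_indep_iff hE).1 hind
  have hecl : e ∈ M.closure (C \ {e}) := hC.mem_closure_diff_singleton he
  have hsub : C \ {e} ⊆ M.closure (((C \ K) \ {e}) ∪ J) := by
    rintro z ⟨hzC, hze⟩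
    by_cases hzK : z ∈ K
    · exact M.closure_subset_closure subset_union_right (hJ.subset_closure hzK)
    · exact M.subset_closure _
        (union_subset ((diff_subset.trans diff_subset).trans hC.subset_ground)
          hJ.indep.subset_ground) (Or.inl ⟨⟨hzC, hzK⟩, hze⟩)
  have hecl2 : e ∈ M.closure (((C \ K) \ {e}) ∪ J) :=
    (M.closure_subset_closure_of_subset_closure hsub) hecl
  have heq : ((C \ K) ∪ J) \ {e} = ((C \ K) \ {e}) ∪ J := by
    rw [union_diff_distrib]
    congr 1
    rw [diff_singleton_eq_self heJ]
  have := hindu.notMem_closure_diff_of_mem (Or.inl ⟨he, heK⟩)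
  rw [heq] at this
  exact this hecl2

lemma feasible_of_no_bad_circuit (hE : M.E.Finite) (hA : IsAreaFun M A) {X : Set α}
    (hX : X ⊆ M.E)
    (hno : ∀ e ∈ X, ¬ Certain A e → ∀ C, (minorAt M A e).IsCircuit' C → e ∈ C →
      ¬ (C ∩ (midSet M A e ∪ (X ∩ bothSet M A e))).Nonempty) :
    FeasibleQuery M A (M.E \ X) := by
  set F := M.E \ X with hF
  refine ⟨diff_subset, fun B hrev => ?_⟩
  have hBA : IsAreaFun M B := by
    intro f hf
    by_cases hfF : f ∈ F
    · obtain ⟨r, -, hr2⟩ := hrev.1 f hfF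
      rw [hr2]
      exact ⟨⟨r, rfl⟩, bddBelow_singleton, bddAbove_singleton⟩
    · rw [hrev.2 f hfF]
      exact hA f hf
  refine exists_UOB hE hBA ?_
  intro e heE hunc C' hC' heC'
  -- e is uncertain, so unrevealed, so e ∈ X
  have heF : e ∉ F := by
    intro heF
    obtain ⟨r, -, hr2⟩ := hrev.1 e heF
    exact hunc ⟨r, hr2⟩
  have heX : e ∈ X := by
    by_contra hc
    exact heF ⟨heE, hc⟩
  have hBe : B e = A e := hrev.2 e heF
  have hAunc : ¬ Certain A e := fun ⟨r, hr⟩ => hunc ⟨r, by rwa [hBe]⟩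
  have hnoe := hno e heX hAunc
  have hlu := uncertain_inf_lt_sup hA heE hAunc
  have hLe : sInf (B e) = sInf (A e) := by rw [hBe]
  have hUe : sSup (B e) = sSup (A e) := by rw [hBe]
  -- revealed classification containments
  have hrevlow : lowSet M A e ⊆ lowSet M B e := by
    rintro f ⟨hfE, hfe, hfsup⟩
    refine ⟨hfE, hfe, ?_⟩
    rw [hLe]
    by_cases hfF : f ∈ F
    · obtain ⟨r, hr1, hr2⟩ := hrev.1 f hfF
      rw [hr2]
      simp only [csSup_singleton]
      exact (le_csSup (hA f hfE).2.2 hr1).trans hfsup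
    · rwa [hrev.2 f hfF]
  have hrevhigh : highSet M A e ⊆ highSet M B e := by
    rintro f ⟨hfE, hfe, hfinf⟩
    refine ⟨hfE, hfe, ?_⟩
    rw [hUe]
    by_cases hfF : f ∈ F
    · obtain ⟨r, hr1, hr2⟩ := hrev.1 f hfF
      rw [hr2]
      simp only [csInf_singleton]
      exact hfinf.trans (csInf_le (hA f hfE).2.1 hr1)
    · rwa [hrev.2 f hfF]
  have hSl : lowSet M B e \ lowSet M A e ⊆ F ∩ (midSet M A e ∪ bothSet M A e) := by
    rintro f ⟨⟨hfE, hfe, hfsup⟩, hflow⟩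
    rw [hLe] at hfsup
    have hfF : f ∈ F := by
      by_contra hfF
      exact hflow ⟨hfE, hfe, by rwa [hrev.2 f hfF] at hfsup⟩
    obtain ⟨r, hr1, hr2⟩ := hrev.1 f hfF
    rw [hr2] at hfsup
    simp only [csSup_singleton] at hfsup
    refine ⟨hfF, ?_⟩
    rcases classify hA heE hAunc hfE hfe with h1 | h1 | h1 | h1
    · exact absurd h1 hflow
    · exfalso
      have h2 : sSup (A e) ≤ r := h1.2.2.trans (csInf_le (hA f hfE).2.1 hr1)
      linarith
    · exact Or.inl h1
    · exact Or.inr h1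
  have hSh : highSet M B e \ highSet M A e ⊆ F ∩ (midSet M A e ∪ bothSet M A e) := by
    rintro f ⟨⟨hfE, hfe, hfinf⟩, hfhigh⟩
    rw [hUe] at hfinf
    have hfF : f ∈ F := by
      by_contra hfF
      exact hfhigh ⟨hfE, hfe, by rwa [hrev.2 f hfF] at hfinf⟩
    obtain ⟨r, hr1, hr2⟩ := hrev.1 f hfF
    rw [hr2] at hfinf
    simp only [csInf_singleton] at hfinf
    refine ⟨hfF, ?_⟩
    rcases classify hA heE hAunc hfE hfe with h1 | h1 | h1 | h1
    · exfalso
      have h2 : r ≤ sInf (A e) := (le_csSup (hA f hfE).2.2 hr1).trans h1.2.2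
      linarith
    · exact absurd h1 hfhigh
    · exact Or.inl h1
    · exact Or.inr h1
  have hmidB : midSet M B e ⊆ midSet M A e := by
    rintro f ⟨hfE, hfe, v, hv1, hv2⟩
    rw [hLe, hUe] at hv2
    by_cases hfF : f ∈ F
    · obtain ⟨r, hr1, hr2⟩ := hrev.1 f hfF
      rw [hr2] at hv1
      exact ⟨hfE, hfe, r, hr1, (mem_singleton_iff.1 hv1) ▸ hv2⟩
    · rw [hrev.2 f hfF] at hv1
      exact ⟨hfE, hfe, v, hv1, hv2⟩
  have hbothB : bothSet M B e ⊆ bothSet M A e \ F := by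
    rintro f ⟨hfE, hfe, hfm, ⟨p, hp1, hp2⟩, ⟨q, hq1, hq2⟩⟩
    rw [hLe] at hp2
    rw [hUe] at hq2
    have hfF : f ∉ F := by
      intro hfF
      obtain ⟨r, hr1, hr2⟩ := hrev.1 f hfF
      rw [hr2, mem_singleton_iff] at hp1 hq1
      have hp2' : p ≤ sInf (A e) := hp2
      have hq2' : sSup (A e) ≤ q := hq2
      have hpq : p = q := hp1.trans hq1.symm
      linarith
    rw [hrev.2 f hfF] at hp1 hq1
    refine ⟨⟨hfE, hfe, ?_, ⟨p, hp1, hp2⟩, ⟨q, hq1, hq2⟩⟩, hfF⟩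
    intro hmid
    apply hfm
    refine ⟨hfE, hfe, ?_⟩
    rw [hrev.2 f hfF, hLe, hUe]
    exact hmid.2.2
  -- main transfer argument
  by_contra hne
  have hg' : ∃ g', g' ∈ C' ∧ g' ≠ e := by
    by_contra hg
    push_neg at hg
    apply hne
    exact Subset.antisymm (fun z hz => hg z hz) (singleton_subset_iff.2 heC')
  obtain ⟨g', hg'C, hg'e⟩ := hg'
  obtain ⟨JL, hJL⟩ := M.exists_isBasis (lowSet M A e) lowSet_subset_ground
  obtain ⟨J', hJ', hJLJ'⟩ := hJL.indep.subset_isBasis_of_subset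
    (hJL.subset.trans hrevlow) (fun z hz => hz.1)
  have hJ'L : J' ∩ lowSet M A e = JL :=
    (hJL.eq_of_subset_indep (hJ'.indep.inter_right _)
      (subset_inter hJLJ' hJL.subset) inter_subset_right).symm
  have hind1 : M.Indep ((C' \ {e}) ∪ J') :=
    minorAt_indep_union_indep hE hJ' (hC'.diff_singleton_indep heC')
  have hdep1 : ¬ M.Indep (C' ∪ J') := minorAt_circuit_not_indep_union hE hJ' hC'
  have hCJsub : C' ∪ J' ⊆ M.E := union_subset (hC'.subset_ground.trans
    (fun z hz => hz.1.1)) hJ'.indep.subset_ground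
  obtain ⟨Cm, hCmsub, hCm⟩ := exists_isCircuit_subset hE ⟨hdep1, hCJsub⟩
  have heCm : e ∈ Cm := by
    by_contra hc
    refine hCm.1.not_indep (hind1.subset ?_)
    intro z hz
    rcases hCmsub hz with h1 | h1
    · exact Or.inl ⟨h1, fun hze => hc ((mem_singleton_iff.1 hze) ▸ hz)⟩
    · exact Or.inr h1
  have heJ' : e ∉ J' := fun hc => (hJ'.subset hc).2.1 rfl
  -- D := Cm \ lowA is dependent in the A-minor
  have hDcon : ¬ (M.con (lowSet M A e)).Indep (Cm \ lowSet M A e) :=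
    not_con_indep_circuit_diff hE hJL hCm heCm not_mem_lowSet_self
  have hDsub : Cm \ lowSet M A e ⊆ C' ∪ (J' \ lowSet M A e) := by
    rintro z ⟨hzCm, hzl⟩
    rcases hCmsub hzCm with h1 | h1
    · exact Or.inl h1
    · exact Or.inr ⟨h1, hzl⟩
  have hJ'diff : J' \ lowSet M A e ⊆ midSet M A e ∪ bothSet M A e := by
    rintro z ⟨hzJ', hzl⟩
    exact (hSl ⟨hJ'.subset hzJ', hzl⟩).2
  have hDground : Cm \ lowSet M A e ⊆ (minorAt M A e).E := by
    rintro z hz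
    rcases hDsub hz with h1 | h1
    · have h2 := hC'.subset_ground h1
      exact ⟨⟨h2.1.1, fun hc => h2.1.2 (hrevlow hc)⟩, fun hc => h2.2 (hrevhigh hc)⟩
    · rcases hJ'diff h1 with h2 | h2
      · exact ⟨⟨h2.1, not_low_of_mid hA h2⟩, not_high_of_mid hA h2⟩
      · exact ⟨⟨h2.1, not_low_of_both hA heE hAunc h2⟩, not_high_of_both hA heE hAunc h2⟩
  have hDdep : (minorAt M A e).Dep (Cm \ lowSet M A e) := by
    refine ⟨fun hind => hDcon ?_, hDground⟩
    rw [minorAt, del_indep_iff] at hind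
    exact hind.1
  have hEN : (minorAt M A e).E.Finite := hE.subset (diff_subset.trans diff_subset)
  obtain ⟨C₀, hC₀sub, hC₀⟩ := exists_isCircuit_subset hEN hDdep
  by_cases heC₀ : e ∈ C₀
  · -- use hnoe to show C₀ \ {e} ⊆ J', then {e} is dep in the B-minor : contradiction
    have hC₀diff : C₀ \ {e} ⊆ J' := by
      rintro z ⟨hzC₀, hze⟩
      have hzground : z ∈ (minorAt M A e).E := hC₀.subset_ground hzC₀
      rcases mem_mid_or_both_of_mem_minorAt_ground hA heE hAunc hzground hze with h1 | h1
      · exact absurd ⟨hzC₀, Or.inl h1⟩ (fun hc => hnoe C₀ hC₀ heC₀ ⟨z, hc⟩)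
      · have hzX : z ∉ X := fun hzX =>
          hnoe C₀ hC₀ heC₀ ⟨z, hzC₀, Or.inr ⟨hzX, h1⟩⟩
        have hzF : z ∈ F := ⟨h1.1, hzX⟩
        rcases hDsub (hC₀sub hzC₀) with h2 | h2
        · exfalso
          have hzgB : z ∈ (minorAt M B e).E := hC'.subset_ground h2
          rcases mem_mid_or_both_of_mem_minorAt_ground hBA heE hunc hzgB hze with h3 | h3
          · exact (h1.2.2.1) (hmidB h3)
          · exact (hbothB h3).2 hzF
        · exact h2.1
    have hnid : ¬ M.Indep (insert e J') := by
      intro hind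
      apply minorAt_circuit_not_indep_union hE hJL hC₀
      refine hind.subset ?_
      intro z hz
      rcases hz with h1 | h1
      · by_cases hze : z = e
        · exact hze ▸ mem_insert _ _
        · exact mem_insert_of_mem _ (hC₀diff ⟨h1, hze⟩)
      · exact mem_insert_of_mem _ (hJLJ' h1)
    have hdepB : ¬ (minorAt M B e).Indep {e} := by
      intro hind
      have h2 := minorAt_indep_union_indep hE hJ' hind
      rw [singleton_union] at h2
      exact hnid h2
    exact hdepB (hC'.2 {e} ⟨singleton_subset_iff.2 heC',
      fun hsub => hne (Subset.antisymm hsub (singleton_subset_iff.2 heC'))⟩)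
  · -- C₀ avoids e : contained in an independent set, contradiction
    have hC₀sub2 : C₀ ⊆ (C' \ {e}) ∪ (J' \ lowSet M A e) := by
      intro z hz
      have hze : z ≠ e := fun hc => heC₀ (hc ▸ hz)
      rcases hDsub (hC₀sub hz) with h1 | h1
      · exact Or.inl ⟨h1, hze⟩
      · exact Or.inr h1
    have hindN : (minorAt M A e).Indep ((C' \ {e}) ∪ (J' \ lowSet M A e)) := by
      refine minorAt_indep_of_indep_union hE hJL ?_ ?_
      · rintro z (h1 | h1)
        · have h2 := hC'.subset_ground h1.1
          exact ⟨⟨h2.1.1, fun hc => h2.1.2 (hrevlow hc)⟩, fun hc => h2.2 (hrevhigh hc)⟩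
        · rcases hJ'diff h1 with h2 | h2
          · exact ⟨⟨h2.1, not_low_of_mid hA h2⟩, not_high_of_mid hA h2⟩
          · exact ⟨⟨h2.1, not_low_of_both hA heE hAunc h2⟩, not_high_of_both hA heE hAunc h2⟩
      · have heq2 : ((C' \ {e}) ∪ (J' \ lowSet M A e)) ∪ JL = (C' \ {e}) ∪ J' := by
          rw [union_assoc]
          congr 1
          apply Subset.antisymm
          · exact union_subset diff_subset hJLJ'
          · intro z hz
            by_cases hzl : z ∈ lowSet M A e
            · exact Or.inr (by rw [← hJ'L]; exact ⟨hz, hzl⟩)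
            · exact Or.inl ⟨hz, hzl⟩
        rw [heq2]
        exact hind1
    exact hC₀.1.not_indep (hindN.subset hC₀sub2)

end Feasible


/-- Characterization of witness sets via circuits of `M'_e`. -/
theorem witness_set_iff (M : Matroid α) (A : α → Set ℝ)
    (hE : M.E.Finite) (hA : IsAreaFun M A) (X : Set α) (hX : X ⊆ M.E) :
    WitnessSet M A X ↔
      ∃ e ∈ X, ¬ Certain A e ∧ ∃ C, (minorAt M A e).IsCircuit' C ∧ e ∈ C ∧
        (C ∩ (midSet M A e ∪ (X ∩ bothSet M A e))).Nonempty := by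
  constructor
  · intro hW
    by_contra hno
    push_neg at hno
    have hno' : ∀ e ∈ X, ¬ Certain A e → ∀ C, (minorAt M A e).IsCircuit' C → e ∈ C →
        ¬ (C ∩ (midSet M A e ∪ (X ∩ bothSet M A e))).Nonempty := by
      intro e heX hunc C hC heC
      rw [Set.not_nonempty_iff_eq_empty]
      simpa using hno e heX hunc C hC heC
    have hfeas := feasible_of_no_bad_circuit hE hA hX hno'
    obtain ⟨z, hz⟩ := hW _ hfeas
    exact hz.2.2 hz.1
  · rintro ⟨e, heX, hunc, C, hC, heC, g, hgC, hgmb⟩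
    intro F hF
    by_contra hXF
    rw [Set.not_nonempty_iff_eq_empty] at hXF
    have heF : e ∉ F := fun hc => (Set.eq_empty_iff_forall_notMem.1 hXF e) ⟨heX, hc⟩
    have hgmb' : g ∈ midSet M A e ∪ (bothSet M A e \ F) := by
      rcases hgmb with h1 | h1
      · exact Or.inl h1
      · exact Or.inr ⟨h1.2, fun hc => (Set.eq_empty_iff_forall_notMem.1 hXF g) ⟨h1.1, hc⟩⟩
    exact not_feasible_of_bad_circuit hE hA (hX heX) hunc hF.1 heF hC heC hgC hgmb' hF
end

section
/- Let (M, 𝒜) be an uncertainty matroid on a finite ground set E and let e ∈ E be uncertain. Then e ∈ core if and only if there exists a circuit C of the matroid M'_e such that e ∈ C and C ∩ mid(e) ≠ ∅. -/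
open Matroid

variable {α : Type*}

/-- The core: elements whose singleton is a witness set. -/
def core (M : Matroid α) (A : α → Set ℝ) : Set α := {e | WitnessSet M A {e}}

/-! ### Auxiliary infrastructure -/

open Set

namespace UncertainCore

variable {M : Matroid α} {w v : α → ℝ} {S T C D X I J : Set α} {e f : α}

/-! #### setWeight lemmas -/

lemma setWeight_congr {w₁ w₂ : α → ℝ} (h : ∀ x ∈ S, w₁ x = w₂ x) :
    setWeight w₁ S = setWeight w₂ S :=
  finsum_mem_congr rfl h

lemma setWeight_insert (w : α → ℝ) (hS : S.Finite) (he : e ∉ S) :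
    setWeight w (insert e S) = w e + setWeight w S :=
  finsum_mem_insert w he hS

lemma setWeight_diff_singleton (w : α → ℝ) (hS : S.Finite) (hf : f ∈ S) :
    setWeight w S = w f + setWeight w (S \ {f}) := by
  conv_lhs => rw [show S = insert f (S \ {f}) by simp [insert_eq_self.2 hf, insert_diff_singleton]]
  exact setWeight_insert w (hS.diff) (by simp)

lemma setWeight_exchange (w : α → ℝ) (hS : S.Finite) (he : e ∉ S) (hf : f ∈ S) :
    setWeight w (insert e (S \ {f})) = setWeight w S + w e - w f := by
  rw [setWeight_insert w (hS.diff) (fun h => he h.1), setWeight_diff_singleton w hS hf]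
  ring

lemma setWeight_shift (hS : S.Finite) (he : e ∈ S) (h : ∀ f ∈ S, f ≠ e → w f = v f) :
    setWeight w S = setWeight v S + (w e - v e) := by
  rw [setWeight_diff_singleton w hS he, setWeight_diff_singleton v hS he,
    setWeight_congr (w₁ := w) (w₂ := v) (S := S \ {e}) (fun x hx => h x hx.1 hx.2)]
  ring

/-! #### Minimum weight bases -/

lemma exists_isMinBasis (M : Matroid α) (hE : M.E.Finite) (w : α → ℝ) :
    ∃ T, IsMinBasis M w T := by
  have hfin : {B | M.IsBase B}.Finite :=
    hE.finite_subsets.subset (fun B hB => hB.subset_ground)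
  obtain ⟨T, hT, hmin⟩ := Set.exists_min_image _ (setWeight w) hfin M.exists_isBase
  exact ⟨T, hT, fun B hB => hmin B hB⟩

/-! #### Circuits -/

lemma circuit_dep (hC : M.IsCircuit' C) : M.Dep C := hC.1

lemma circuit_subset_ground (hC : M.IsCircuit' C) : C ⊆ M.E := hC.1.subset_ground

lemma circuit_ssubset_indep (hC : M.IsCircuit' C) (hD : D ⊂ C) : M.Indep D := hC.2 D hD

private lemma dep_exists_circuit_aux :
    ∀ n (D : Set α), D.ncard = n → D.Finite → M.Dep D → ∃ C, C ⊆ D ∧ M.IsCircuit' C := by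
  intro n
  induction n using Nat.strong_induction_on with
  | _ n ih =>
    intro D hcard hfin hD
    by_cases h : ∀ X, X ⊂ D → M.Indep X
    · exact ⟨D, subset_rfl, hD, h⟩
    · push_neg at h
      obtain ⟨X, hXD, hX⟩ := h
      obtain ⟨C, hCX, hC⟩ := ih X.ncard (hcard ▸ Set.ncard_lt_ncard hXD hfin) X rfl
        (hfin.subset hXD.subset) ⟨hX, hXD.subset.trans hD.subset_ground⟩
      exact ⟨C, hCX.trans hXD.subset, hC⟩

lemma dep_exists_circuit_subset (hD : M.Dep D) (hfin : D.Finite) :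
    ∃ C, C ⊆ D ∧ M.IsCircuit' C :=
  dep_exists_circuit_aux D.ncard D rfl hfin hD

lemma circuit_mem_closure_diff_singleton (hC : M.IsCircuit' C) (hf : f ∈ C) :
    f ∈ M.closure (C \ {f}) := by
  have hind : M.Indep (C \ {f}) := circuit_ssubset_indep hC (diff_singleton_ssubset.2 hf)
  rw [hind.mem_closure_iff_of_notMem (by simp), insert_diff_singleton, insert_eq_of_mem hf]
  exact circuit_dep hC

/-! #### Exchange lemmas -/

lemma exchange_in (hE : M.E.Finite) (hT : M.IsBase T) (heE : e ∈ M.E) (heT : e ∉ T)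
    (hC : M.IsCircuit' C) (heC : e ∈ C) (hCT : C ⊆ insert e T) (hf : f ∈ C) (hfe : f ≠ e) :
    M.IsBase (insert e (T \ {f})) := by
  have hfT : f ∈ T := ((hCT hf).resolve_left hfe)
  refine hT.exchange_isBase_of_indep heT ?_
  by_contra hdep
  have hdep' : M.Dep (insert e (T \ {f})) :=
    ⟨hdep, insert_subset heE (diff_subset.trans hT.subset_ground)⟩
  obtain ⟨C₂, hC₂ss, hC₂⟩ := dep_exists_circuit_subset hdep' (hE.subset hdep'.subset_ground)
  have heC₂ : e ∈ C₂ := by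
    by_contra heC₂
    exact (circuit_dep hC₂).not_indep (hT.indep.subset (fun x hx =>
      ((hC₂ss hx).resolve_left (fun h => heC₂ (h ▸ hx))).1))
  have h1 : e ∈ M.closure (T \ {f}) := by
    refine M.closure_subset_closure (show C₂ \ {e} ⊆ T \ {f} from ?_)
      (circuit_mem_closure_diff_singleton hC₂ heC₂)
    intro x hx
    exact ((hC₂ss hx.1).resolve_left hx.2)
  have h2 : C \ {f} ⊆ M.closure (T \ {f}) := by
    intro x hx
    rcases (hCT hx.1) with h | h
    · exact h ▸ h1
    · exact M.subset_closure _ (diff_subset.trans hT.subset_ground) ⟨h, hx.2⟩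
  have h3 : f ∈ M.closure (T \ {f}) :=
    M.closure_subset_closure_of_subset_closure h2 (circuit_mem_closure_diff_singleton hC hf)
  exact hT.indep.notMem_closure_diff_of_mem hfT h3

lemma exchange_out (hT : M.IsBase T) (heT : e ∈ T) (hC : M.IsCircuit' C) (heC : e ∈ C) :
    ∃ f, f ∈ C \ {e} ∧ f ∉ T ∧ M.IsBase (insert f (T \ {e})) := by
  have hnotall : ¬ (C \ {e} ⊆ M.closure (T \ {e})) := by
    intro hss
    exact hT.indep.notMem_closure_diff_of_mem heT
      (M.closure_subset_closure_of_subset_closure hss (circuit_mem_closure_diff_singleton hC heC))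
  obtain ⟨f, hfC, hfcl⟩ := not_subset.1 hnotall
  have hfE : f ∈ M.E := circuit_subset_ground hC hfC.1
  have hfT : f ∉ T := by
    intro h
    exact hfcl (M.subset_closure _ (diff_subset.trans hT.subset_ground) ⟨h, hfC.2⟩)
  have hind : M.Indep (insert f (T \ {e})) := by
    rw [(hT.indep.subset diff_subset).insert_indep_iff_of_notMem (fun h => hfT h.1)]
    exact ⟨hfE, hfcl⟩
  exact ⟨f, hfC, hfT, hT.exchange_isBase_of_indep hfT hind⟩

end UncertainCore

namespace UncertainCore

variable {M : Matroid α} {w v : α → ℝ} {S T C D X I J : Set α} {e f : α}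

/-! #### Forcing lemmas -/

lemma minBasis_mem (hE : M.E.Finite) (heE : e ∈ M.E)
    (H : ∀ C, M.IsCircuit' C → e ∈ C → ∃ f ∈ C \ {e}, w e < w f)
    (hT : IsMinBasis M w T) : e ∈ T := by
  by_contra heT
  have hdep : M.Dep (insert e T) := hT.1.insert_dep ⟨heE, heT⟩
  obtain ⟨C, hCss, hC⟩ := dep_exists_circuit_subset hdep (hE.subset hdep.subset_ground)
  have heC : e ∈ C := by
    by_contra heC
    exact (circuit_dep hC).not_indep (hT.1.indep.subset (fun x hx =>
      ((hCss hx).resolve_left (fun h => heC (h ▸ hx)))))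
  obtain ⟨f, hfC, hwf⟩ := H C hC heC
  have hB' : M.IsBase (insert e (T \ {f})) :=
    exchange_in hE hT.1 heE heT hC heC hCss hfC.1 hfC.2
  have hfT : f ∈ T := (hCss hfC.1).resolve_left hfC.2
  have := hT.2 _ hB'
  rw [setWeight_exchange w (hE.subset hT.1.subset_ground) heT hfT] at this
  linarith

lemma minBasis_not_mem (hE : M.E.Finite)
    (H : ∃ C, M.IsCircuit' C ∧ e ∈ C ∧ ∀ f ∈ C \ {e}, w f < w e)
    (hT : IsMinBasis M w T) : e ∉ T := by
  intro heT
  obtain ⟨C, hC, heC, hw⟩ := H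
  obtain ⟨f, hfCe, hfT, hB'⟩ := exchange_out hT.1 heT hC heC
  have := hT.2 _ hB'
  rw [setWeight_exchange w (hE.subset hT.1.subset_ground) hfT heT] at this
  have := hw f hfCe
  linarith

lemma exists_minBasis_mem (hE : M.E.Finite) (heE : e ∈ M.E)
    (H : ∀ C, M.IsCircuit' C → e ∈ C → ∃ f ∈ C \ {e}, w e ≤ w f) :
    ∃ T, IsMinBasis M w T ∧ e ∈ T := by
  obtain ⟨T, hT⟩ := exists_isMinBasis M hE w
  by_cases heT : e ∈ T
  · exact ⟨T, hT, heT⟩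
  have hdep : M.Dep (insert e T) := hT.1.insert_dep ⟨heE, heT⟩
  obtain ⟨C, hCss, hC⟩ := dep_exists_circuit_subset hdep (hE.subset hdep.subset_ground)
  have heC : e ∈ C := by
    by_contra heC
    exact (circuit_dep hC).not_indep (hT.1.indep.subset (fun x hx =>
      ((hCss hx).resolve_left (fun h => heC (h ▸ hx)))))
  obtain ⟨f, hfC, hwf⟩ := H C hC heC
  have hB' : M.IsBase (insert e (T \ {f})) :=
    exchange_in hE hT.1 heE heT hC heC hCss hfC.1 hfC.2
  have hfT : f ∈ T := (hCss hfC.1).resolve_left hfC.2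
  have hwle : setWeight w (insert e (T \ {f})) ≤ setWeight w T := by
    rw [setWeight_exchange w (hE.subset hT.1.subset_ground) heT hfT]
    linarith
  exact ⟨_, ⟨hB', fun B hB => hwle.trans (hT.2 B hB)⟩, mem_insert _ _⟩

lemma exists_minBasis_not_mem (hE : M.E.Finite)
    (H : ∃ C, M.IsCircuit' C ∧ e ∈ C ∧ ∀ f ∈ C \ {e}, w f ≤ w e) :
    ∃ T, IsMinBasis M w T ∧ e ∉ T := by
  obtain ⟨T, hT⟩ := exists_isMinBasis M hE w
  by_cases heT : e ∈ T
  swap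
  · exact ⟨T, hT, heT⟩
  obtain ⟨C, hC, heC, hw⟩ := H
  obtain ⟨f, hfCe, hfT, hB'⟩ := exchange_out hT.1 heT hC heC
  have hwle : setWeight w (insert f (T \ {e})) ≤ setWeight w T := by
    rw [setWeight_exchange w (hE.subset hT.1.subset_ground) hfT heT]
    have := hw f hfCe
    linarith
  refine ⟨_, ⟨hB', fun B hB => hwle.trans (hT.2 B hB)⟩, ?_⟩
  rintro (h | h)
  · exact hfCe.2 (mem_singleton_iff.2 h.symm)
  · exact h.2 rfl

end UncertainCore

namespace UncertainCore

variable {M : Matroid α} {w v : α → ℝ} {S T C D X I J : Set α} {e f : α}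

/-! #### Deletion and contraction -/

lemma del_ground (M : Matroid α) (D : Set α) : (M.del D).E = M.E \ D := rfl

lemma del_indep_iff : (M.del D).Indep I ↔ M.Indep I ∧ I ⊆ M.E \ D :=
  Matroid.restrict_indep_iff

lemma con_ground (M : Matroid α) (X : Set α) : (M.con X).E = M.E \ X := by
  simp [Matroid.con, del_ground]

lemma con_indep_iff (hX : X ⊆ M.E) :
    (M.con X).Indep I ↔ I ⊆ M.E \ X ∧ ∃ J, M.IsBasis J X ∧ M.Indep (I ∪ J) := by
  rw [Matroid.con]
  constructor
  · intro h
    obtain ⟨hIss, B₀, hB₀, hdisj⟩ := Matroid.dual_indep_iff_exists'.1 h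
    have hIss' : I ⊆ M.E \ X := hIss
    rw [Matroid.del, Matroid.isBase_restrict_iff (show M✶.E \ X ⊆ M✶.E from diff_subset)] at hB₀
    have hB₀' : M✶.IsBasis B₀ (M.E \ X) := by rwa [Matroid.dual_ground] at hB₀
    obtain ⟨Bs, hBs, hB₀Bs⟩ := hB₀'.indep.exists_isBase_superset
    have hinter : Bs ∩ (M.E \ X) = B₀ :=
      (hB₀'.eq_of_subset_indep (hBs.indep.inter_right _)
        (subset_inter hB₀Bs hB₀'.subset) inter_subset_right).symm
    have hBc : M.IsBase (M.E \ Bs) := hBs.compl_isBase_of_dual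
    have hJ : M.IsBasis ((M.E \ Bs) ∩ X) X := by
      rw [hBc.inter_isBasis_iff_compl_inter_isBasis_dual hX,
        diff_diff_cancel_left (show Bs ⊆ M.E from hBs.subset_ground), hinter]
      exact hB₀'
    refine ⟨hIss', (M.E \ Bs) ∩ X, hJ, hBc.indep.subset (union_subset ?_ inter_subset_left)⟩
    intro x hx
    refine ⟨(hIss' hx).1, fun hxB => ?_⟩
    exact (disjoint_left.1 hdisj) hx (hinter ▸ ⟨hxB, hIss' hx⟩)
  · rintro ⟨hIss, J, hJ, hind⟩
    obtain ⟨B, hB, hIJB⟩ := hind.exists_isBase_superset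
    have hBX : B ∩ X = J :=
      (hJ.eq_of_subset_indep (hB.indep.inter_right X)
        (subset_inter (subset_union_right.trans hIJB) hJ.subset) inter_subset_right).symm
    have hbd : M✶.IsBasis ((M.E \ B) ∩ (M.E \ X)) (M.E \ X) :=
      hB.compl_inter_isBasis_of_inter_isBasis (hBX.symm ▸ hJ)
    rw [Matroid.dual_indep_iff_exists']
    refine ⟨hIss, (M.E \ B) ∩ (M.E \ X), ?_, ?_⟩
    · rw [Matroid.del, Matroid.isBase_restrict_iff (show M✶.E \ X ⊆ M✶.E from diff_subset)]
      rwa [Matroid.dual_ground]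
    · exact disjoint_left.2 (fun x hx hx' => hx'.1.2 (hIJB (subset_union_left hx)))

lemma con_dep_of_circuit (hX : X ⊆ M.E) (hD : M.IsCircuit' D) {e₀ : α} (he₀ : e₀ ∈ D \ X) :
    (M.con X).Dep (D \ X) := by
  rw [Matroid.dep_iff, con_ground]
  refine ⟨fun hind => ?_, diff_subset_diff_left (circuit_subset_ground hD)⟩
  obtain ⟨-, J, hJ, hind'⟩ := (con_indep_iff hX).1 hind
  have h1 : e₀ ∈ M.closure (D \ {e₀}) := circuit_mem_closure_diff_singleton hD he₀.1
  have hEs : ((D \ X) \ {e₀}) ∪ J ⊆ M.E :=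
    union_subset ((diff_subset.trans diff_subset).trans (circuit_subset_ground hD))
      hJ.indep.subset_ground
  have hsub : D \ {e₀} ⊆ M.closure (((D \ X) \ {e₀}) ∪ J) := by
    intro x hx
    by_cases hxX : x ∈ X
    · exact M.closure_subset_closure subset_union_right (hJ.subset_closure hxX)
    · exact M.subset_closure _ hEs (Or.inl ⟨⟨hx.1, hxX⟩, hx.2⟩)
  have h2 : e₀ ∈ M.closure (((D \ X) \ {e₀}) ∪ J) :=
    M.closure_subset_closure_of_subset_closure hsub h1
  have he₀J : e₀ ∉ J := fun h => he₀.2 (hJ.subset h)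
  have heq : (D \ X ∪ J) \ {e₀} = ((D \ X) \ {e₀}) ∪ J := by
    rw [union_diff_distrib, diff_singleton_eq_self he₀J]
  exact hind'.notMem_closure_diff_of_mem (Or.inl he₀) (heq ▸ h2)

lemma con_circuit_lift (hE : M.E.Finite) (hX : X ⊆ M.E) (hC : (M.con X).IsCircuit' C) :
    ∃ D, M.IsCircuit' D ∧ D \ X = C ∧ C ⊆ D := by
  obtain ⟨J, hJ⟩ := M.exists_isBasis X hX
  have hCss : C ⊆ M.E \ X := (con_ground M X) ▸ (circuit_dep hC).subset_ground
  have hdep : M.Dep (C ∪ J) := by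
    rw [Matroid.dep_iff]
    refine ⟨fun hind => (circuit_dep hC).not_indep ?_,
      union_subset (hCss.trans diff_subset) hJ.indep.subset_ground⟩
    exact (con_indep_iff hX).2 ⟨hCss, J, hJ, hind⟩
  obtain ⟨D, hDss, hD⟩ := dep_exists_circuit_subset hdep (hE.subset hdep.subset_ground)
  have hDX : D \ X ⊆ C := fun x hx =>
    (hDss hx.1).elim id (fun h => absurd (hJ.subset h) hx.2)
  have hne : (D \ X).Nonempty := by
    rw [nonempty_iff_ne_empty]
    intro h
    have hDJ : D ⊆ J := by
      intro x hx
      exact (hDss hx).elim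
        (fun hc => absurd ((diff_eq_empty.1 h) hx) (fun hxX => (hCss hc).2 hxX)) id
    exact (circuit_dep hD).not_indep (hJ.indep.subset hDJ)
  obtain ⟨e₀, he₀⟩ := hne
  have hdepDX : (M.con X).Dep (D \ X) := con_dep_of_circuit hX hD he₀
  have heq : D \ X = C := by
    by_contra hneq
    exact hdepDX.not_indep (circuit_ssubset_indep hC (ssubset_of_subset_of_ne hDX hneq))
  exact ⟨D, hD, heq, heq ▸ diff_subset⟩

lemma con_closure_circuit (hE : M.E.Finite) (hX : X ⊆ M.E) (hT : T ⊆ M.E \ X)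
    (heE : e ∈ M.E) (heX : e ∉ X) (heT : e ∉ T) (hecl : e ∈ M.closure (T ∪ X)) :
    ∃ C, (M.con X).IsCircuit' C ∧ e ∈ C ∧ C ⊆ insert e T := by
  obtain ⟨I, hI⟩ := (M.con X).exists_isBasis T (by rw [con_ground]; exact hT)
  have hIT : I ⊆ T := hI.subset
  have hIground : insert e I ⊆ M.E \ X := insert_subset ⟨heE, heX⟩ (hIT.trans hT)
  have hdep : (M.con X).Dep (insert e I) := by
    rw [Matroid.dep_iff, con_ground]
    refine ⟨fun hind => ?_, hIground⟩
    obtain ⟨-, J', hJ', hindM⟩ := (con_indep_iff hX).1 hind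
    have hIJ' : M.Indep (I ∪ J') := hindM.subset (union_subset_union_left _ (subset_insert e I))
    have hIJE : I ∪ J' ⊆ M.E := hIJ'.subset_ground
    have hTcl : T ⊆ M.closure (I ∪ J') := by
      intro t ht
      by_cases htI : t ∈ I
      · exact M.subset_closure _ hIJE (Or.inl htI)
      · have hdept : ¬ (M.con X).Indep (insert t I) := (hI.insert_dep ⟨ht, htI⟩).not_indep
        have hdepM : ¬ M.Indep (insert t I ∪ J') := fun hh =>
          hdept ((con_indep_iff hX).2 ⟨insert_subset (hT ht) (hIT.trans hT), J', hJ', hh⟩)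
        have ht' : t ∉ I ∪ J' := by
          rintro (h | h)
          · exact htI h
          · exact (hT ht).2 (hJ'.subset h)
        rw [hIJ'.mem_closure_iff_of_notMem ht', Matroid.dep_iff]
        rw [insert_union] at hdepM
        exact ⟨hdepM, insert_subset (hT ht).1 hIJE⟩
    have hXcl : X ⊆ M.closure (I ∪ J') :=
      hJ'.subset_closure.trans (M.closure_subset_closure subset_union_right)
    have hecl' : e ∈ M.closure (I ∪ J') :=
      M.closure_subset_closure_of_subset_closure (union_subset hTcl hXcl) hecl
    have heIJ' : e ∉ I ∪ J' := by
      rintro (h | h)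
      · exact heT (hIT h)
      · exact heX (hJ'.subset h)
    have hindM' : M.Indep (insert e (I ∪ J')) := by rwa [← insert_union]
    exact hindM'.notMem_closure_diff_of_mem (mem_insert _ _)
      (by rwa [insert_diff_self_of_notMem heIJ'])
  obtain ⟨C, hCss, hC⟩ := dep_exists_circuit_subset hdep
      ((hE.diff).subset ((con_ground M X) ▸ hdep.subset_ground))
  have heC : e ∈ C := by
    by_contra heC
    exact (circuit_dep hC).not_indep (hI.indep.subset (fun x hx =>
      (hCss hx).resolve_left (fun h => heC (h ▸ hx))))
  exact ⟨C, hC, heC, hCss.trans (insert_subset_insert hIT)⟩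

lemma del_circuit_of (hC : M.IsCircuit' C) (h : C ⊆ M.E \ D) : (M.del D).IsCircuit' C := by
  rw [Matroid.del]
  refine ⟨Matroid.restrict_dep_iff.2 ⟨(circuit_dep hC).not_indep, h⟩, fun D' hD' => ?_⟩
  exact Matroid.restrict_indep_iff.2 ⟨circuit_ssubset_indep hC hD', hD'.subset.trans h⟩

lemma del_circuit (hC : (M.del D).IsCircuit' C) : M.IsCircuit' C ∧ C ⊆ M.E \ D := by
  rw [Matroid.del] at hC
  have hdep := Matroid.restrict_dep_iff.1 (circuit_dep hC)
  refine ⟨⟨⟨hdep.1, hdep.2.trans diff_subset⟩, fun D' hD' => ?_⟩, hdep.2⟩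
  exact (Matroid.restrict_indep_iff.1 (circuit_ssubset_indep hC hD')).1

end UncertainCore

namespace UncertainCore

variable {M : Matroid α} {A : α → Set ℝ} {e f : α}

/-! #### Areas -/

lemma lt_of_uncertain (hA : IsAreaFun M A) (he : e ∈ M.E) (hu : ¬ Certain A e) :
    sInf (A e) < sSup (A e) := by
  obtain ⟨hne, hbb, hba⟩ := hA e he
  rcases lt_or_eq_of_le (csInf_le_csSup hne hbb hba) with h | h
  · exact h
  refine absurd ⟨sInf (A e), (hne.subset_singleton_iff.1 (fun x hx => ?_))⟩ hu
  exact le_antisymm ((le_csSup hba hx).trans_eq h.symm) (csInf_le hbb hx)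

lemma low_le (hA : IsAreaFun M A) (hlow : f ∈ lowSet M A e) {x : ℝ} (hx : x ∈ A f) :
    x ≤ sInf (A e) :=
  (le_csSup (hA f hlow.1).2.2 hx).trans hlow.2.2

lemma high_ge (hA : IsAreaFun M A) (hhigh : f ∈ highSet M A e) {x : ℝ} (hx : x ∈ A f) :
    sSup (A e) ≤ x :=
  hhigh.2.2.trans (csInf_le (hA f hhigh.1).2.1 hx)

lemma low_not_mid (hA : IsAreaFun M A) (hlow : f ∈ lowSet M A e) : f ∉ midSet M A e := by
  rintro ⟨-, -, x, hxA, hx⟩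
  exact absurd (low_le hA hlow hxA) (not_le.2 hx.1)

lemma low_not_both (hA : IsAreaFun M A) (hLU : sInf (A e) < sSup (A e))
    (hlow : f ∈ lowSet M A e) : f ∉ bothSet M A e := by
  rintro ⟨-, -, -, -, x, hxA, hx⟩
  have h1 : sSup (A e) ≤ sInf (A e) := hx.trans (low_le hA hlow hxA)
  exact absurd h1 (not_le.2 hLU)

lemma high_not_mid (hA : IsAreaFun M A) (hhigh : f ∈ highSet M A e) : f ∉ midSet M A e := by
  rintro ⟨-, -, x, hxA, hx⟩
  exact absurd (high_ge hA hhigh hxA) (not_le.2 hx.2)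

lemma high_not_both (hA : IsAreaFun M A) (hLU : sInf (A e) < sSup (A e))
    (hhigh : f ∈ highSet M A e) : f ∉ bothSet M A e := by
  rintro ⟨-, -, -, ⟨x, hxA, hx⟩, -⟩
  exact absurd (high_ge hA hhigh hxA) (not_le.2 (lt_of_le_of_lt hx hLU))

lemma low_not_high (hA : IsAreaFun M A) (hLU : sInf (A e) < sSup (A e))
    (hlow : f ∈ lowSet M A e) : f ∉ highSet M A e := by
  rintro ⟨hfE, -, hh⟩
  obtain ⟨hne, hbb, hba⟩ := hA f hfE
  have := (hh.trans (csInf_le_csSup hne hbb hba)).trans hlow.2.2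
  exact absurd this (not_le.2 hLU)

lemma mem_both_of (hA : IsAreaFun M A) (hfE : f ∈ M.E) (hfe : f ≠ e)
    (h1 : f ∉ lowSet M A e) (h2 : f ∉ highSet M A e) (h3 : f ∉ midSet M A e) :
    f ∈ bothSet M A e := by
  have hsplit : ∀ x ∈ A f, x ≤ sInf (A e) ∨ sSup (A e) ≤ x := by
    intro x hx
    by_contra hc
    push_neg at hc
    exact h3 ⟨hfE, hfe, x, hx, hc.1, hc.2⟩
  refine ⟨hfE, hfe, h3, ?_, ?_⟩
  · by_contra hempty
    refine h2 ⟨hfE, hfe, le_csInf (hA f hfE).1 (fun x hx => ?_)⟩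
    rcases hsplit x hx with h | h
    · exact absurd (⟨x, hx, h⟩ : ((A f) ∩ Iic (sInf (A e))).Nonempty) hempty
    · exact h
  · by_contra hempty
    refine h1 ⟨hfE, hfe, csSup_le (hA f hfE).1 (fun x hx => ?_)⟩
    rcases hsplit x hx with h | h
    · exact h
    · exact absurd (⟨x, hx, h⟩ : ((A f) ∩ Ici (sSup (A e))).Nonempty) hempty

end UncertainCore

namespace UncertainCore

variable {M : Matroid α} {A : α → Set ℝ} {e : α}

lemma core_of_circuit (M : Matroid α) (A : α → Set ℝ) (hE : M.E.Finite) (hA : IsAreaFun M A)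
    (e : α) (he : e ∈ M.E) (hu : ¬ Certain A e)
    (C : Set α) (hCmin : (minorAt M A e).IsCircuit' C) (heC : e ∈ C)
    (hmid : (C ∩ midSet M A e).Nonempty) : e ∈ core M A := by
  classical
  intro F hF
  by_cases heF : e ∈ F
  · exact ⟨e, rfl, heF⟩
  exfalso
  have hLU : sInf (A e) < sSup (A e) := lt_of_uncertain hA he hu
  obtain ⟨g, hgC, hgmid⟩ := hmid
  have hgne : g ≠ e := hgmid.2.1
  have hlowE : lowSet M A e ⊆ M.E := fun x hx => hx.1
  rw [minorAt] at hCmin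
  have hCcon := del_circuit hCmin
  obtain ⟨D, hD, hDlow, hCD⟩ := con_circuit_lift hE hlowE hCcon.1
  have helow : e ∉ lowSet M A e := fun h => h.2.1 rfl
  -- the adversarial valuation
  set v : α → ℝ := fun f =>
    if hf : f ∈ midSet M A e then hf.2.2.some
    else if hb : f ∈ bothSet M A e then
      (if f ∈ D then hb.2.2.2.1.some else hb.2.2.2.2.some)
    else if hfE : f ∈ M.E then (hA f hfE).1.some
    else 0 with hv
  have hv_mid : ∀ f (hf : f ∈ midSet M A e),
      v f ∈ A f ∩ Ioo (sInf (A e)) (sSup (A e)) := by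
    intro f hf
    rw [hv]
    simp only [dif_pos hf]
    exact hf.2.2.some_mem
  have hv_both_in : ∀ f (hb : f ∈ bothSet M A e), f ∈ D →
      v f ∈ A f ∩ Iic (sInf (A e)) := by
    intro f hb hfD
    rw [hv]
    simp only [dif_neg hb.2.2.1, dif_pos hb, if_pos hfD]
    exact hb.2.2.2.1.some_mem
  have hv_both_out : ∀ f (hb : f ∈ bothSet M A e), f ∉ D →
      v f ∈ A f ∩ Ici (sSup (A e)) := by
    intro f hb hfD
    rw [hv]
    simp only [dif_neg hb.2.2.1, dif_pos hb, if_neg hfD]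
    exact hb.2.2.2.2.some_mem
  have hv_rest : ∀ f, f ∉ midSet M A e → f ∉ bothSet M A e → ∀ hfE : f ∈ M.E, v f ∈ A f := by
    intro f h1 h2 hfE
    rw [hv]
    simp only [dif_neg h1, dif_neg h2, dif_pos hfE]
    exact (hA f hfE).1.some_mem
  have hv_memA : ∀ f, f ∈ M.E → v f ∈ A f := by
    intro f hfE
    by_cases h1 : f ∈ midSet M A e
    · exact (hv_mid f h1).1
    by_cases h2 : f ∈ bothSet M A e
    · by_cases h3 : f ∈ D
      · exact (hv_both_in f h2 h3).1
      · exact (hv_both_out f h2 h3).1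
    · exact hv_rest f h1 h2 hfE
  have hv_low : ∀ f ∈ lowSet M A e, v f ≤ sInf (A e) := by
    intro f hf
    exact low_le hA hf (hv_rest f (low_not_mid hA hf) (low_not_both hA hLU hf) hf.1)
  have hv_high : ∀ f ∈ highSet M A e, sSup (A e) ≤ v f := by
    intro f hf
    exact high_ge hA hf (hv_rest f (high_not_mid hA hf) (high_not_both hA hLU hf) hf.1)
  -- thresholds
  have hmidfin : (midSet M A e).Finite := hE.subset (fun x hx => hx.1)
  obtain ⟨f0, hf0, hf0min⟩ := Set.exists_min_image _ v hmidfin ⟨g, hgmid⟩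
  have hτL : sInf (A e) < v f0 := (hv_mid f0 hf0).2.1
  have hτU : v f0 < sSup (A e) := (hv_mid f0 hf0).2.2
  obtain ⟨t1, ht1A, ht1τ⟩ := exists_lt_of_csInf_lt (hA e he).1 hτL
  have hgD : g ∈ D := hCD hgC
  have hDE : D ⊆ M.E := circuit_subset_ground hD
  have hDhigh : ∀ x ∈ D, x ∉ highSet M A e := by
    intro x hxD hxh
    have hxlow : x ∉ lowSet M A e := fun hl => low_not_high hA hLU hl hxh
    exact (hCcon.2 (hDlow ▸ ⟨hxD, hxlow⟩)).2 hxh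
  obtain ⟨f1, hf1, hf1max⟩ :=
    Set.exists_max_image (D \ {e}) v ((hE.subset hDE).diff)
      ⟨g, hgD, fun h => hgne (mem_singleton_iff.1 h)⟩
  have hf1E : f1 ∈ M.E := hDE hf1.1
  have hμU : v f1 < sSup (A e) := by
    by_cases hm : f1 ∈ midSet M A e
    · exact (hv_mid f1 hm).2.2
    by_cases hb : f1 ∈ bothSet M A e
    · exact lt_of_le_of_lt (hv_both_in f1 hb hf1.1).2 hLU
    by_cases hl : f1 ∈ lowSet M A e
    · exact lt_of_le_of_lt (hv_low f1 hl) hLU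
    · exact absurd (mem_both_of hA hf1E (fun h => hf1.2 h) hl
        (fun hh => hDhigh f1 hf1.1 hh) hm) hb
  obtain ⟨t2, ht2A, ht2μ⟩ := exists_lt_of_lt_csSup (hA e he).1 hμU
  -- the revelation and the two realizations
  set w1 : α → ℝ := Function.update v e t1 with hw1
  set w2 : α → ℝ := Function.update v e t2 with hw2
  have hw1e : w1 e = t1 := by rw [hw1]; exact Function.update_self _ _ _
  have hw2e : w2 e = t2 := by rw [hw2]; exact Function.update_self _ _ _
  have hw1ne : ∀ f, f ≠ e → w1 f = v f := by
    intro f hf; rw [hw1]; exact Function.update_of_ne hf _ _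
  have hw2ne : ∀ f, f ≠ e → w2 f = v f := by
    intro f hf; rw [hw2]; exact Function.update_of_ne hf _ _
  set Brev : α → Set ℝ := fun f => if f ∈ F then {v f} else A f with hBrev
  have hrev : IsRevelation M A F Brev := by
    constructor
    · intro f hfF
      refine ⟨v f, hv_memA f (hF.1 hfF), ?_⟩
      rw [hBrev]
      simp only [if_pos hfF]
    · intro f hf
      rw [hBrev]
      simp only [if_neg hf]
  obtain ⟨T, hT⟩ := hF.2 Brev hrev
  have hreal : ∀ t, t ∈ A e → Realization M Brev (Function.update v e t) := by
    intro t ht f hfE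
    by_cases hfe : f = e
    · subst hfe
      rw [Function.update_self, hBrev]
      simp only [if_neg heF]
      exact ht
    · rw [Function.update_of_ne hfe, hBrev]
      by_cases hfF : f ∈ F
      · simp only [if_pos hfF]
        exact rfl
      · simp only [if_neg hfF]
        exact hv_memA f hfE
  have hmin1 := hT w1 (hreal t1 ht1A)
  have hmin2 := hT w2 (hreal t2 ht2A)
  have heT : e ∈ T := by
    refine minBasis_mem hE he ?_ hmin1
    intro C' hC' heC'
    by_contra hno
    push_neg at hno
    have hsub : C' \ lowSet M A e ⊆ C \ {g} := by
      intro x hx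
      by_cases hxe : x = e
      · subst hxe
        exact ⟨heC, fun hh => hgne (mem_singleton_iff.1 hh).symm⟩
      have hxE : x ∈ M.E := circuit_subset_ground hC' hx.1
      have hw := hno x ⟨hx.1, fun hh => hxe (mem_singleton_iff.1 hh)⟩
      rw [hw1ne x hxe, hw1e] at hw
      have hxmid : x ∉ midSet M A e := fun hm =>
        absurd hw (not_le.2 (lt_of_lt_of_le ht1τ (hf0min x hm)))
      have hxhigh : x ∉ highSet M A e := fun hh =>
        absurd hw (not_le.2 (lt_of_lt_of_le (ht1τ.trans hτU) (hv_high x hh)))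
      have hxlow : x ∉ lowSet M A e := hx.2
      have hxboth : x ∈ bothSet M A e := mem_both_of hA hxE hxe hxlow hxhigh hxmid
      have hxD : x ∈ D := by
        by_contra hxD
        exact absurd hw
          (not_le.2 (lt_of_lt_of_le (ht1τ.trans hτU) (hv_both_out x hxboth hxD).2))
      exact ⟨hDlow ▸ ⟨hxD, hxlow⟩, fun hh => hxmid ((mem_singleton_iff.1 hh) ▸ hgmid)⟩
    have hdep : (M.con (lowSet M A e)).Dep (C' \ lowSet M A e) :=
      con_dep_of_circuit hlowE hC' ⟨heC', helow⟩
    have hss : C' \ lowSet M A e ⊂ C :=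
      ssubset_of_subset_of_ssubset hsub (diff_singleton_ssubset.2 hgC)
    exact hdep.not_indep (circuit_ssubset_indep hCcon.1 hss)
  have heT' : e ∉ T := by
    refine minBasis_not_mem hE ⟨D, hD, hCD heC, fun f hf => ?_⟩ hmin2
    rw [hw2e, hw2ne f (fun hh => hf.2 (mem_singleton_iff.2 hh))]
    exact lt_of_le_of_lt (hf1max f hf) ht2μ
  exact heT' heT

end UncertainCore

namespace UncertainCore

lemma feasible_compl (M : Matroid α) (A : α → Set ℝ) (hE : M.E.Finite) (hA : IsAreaFun M A)
    (e : α) (he : e ∈ M.E)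
    (hno : ¬ ∃ C, (minorAt M A e).IsCircuit' C ∧ e ∈ C ∧ (C ∩ midSet M A e).Nonempty) :
    FeasibleQuery M A (M.E \ {e}) := by
  classical
  refine ⟨diff_subset, fun Brev hrev => ?_⟩
  choose! r hrA hrB using hrev.1
  set wU : α → ℝ := Function.update r e (sSup (A e)) with hwU
  set wL : α → ℝ := Function.update r e (sInf (A e)) with hwL
  have hwUe : wU e = sSup (A e) := by rw [hwU]; exact Function.update_self _ _ _
  have hwLe : wL e = sInf (A e) := by rw [hwL]; exact Function.update_self _ _ _
  have hwUne : ∀ f, f ≠ e → wU f = r f := fun f hf => by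
    rw [hwU]; exact Function.update_of_ne hf _ _
  have hwLne : ∀ f, f ≠ e → wL f = r f := fun f hf => by
    rw [hwL]; exact Function.update_of_ne hf _ _
  have hBrevE : Brev e = A e := hrev.2 e (fun h => h.2 rfl)
  have hagree : ∀ w, Realization M Brev w → ∀ f ∈ M.E, f ≠ e → w f = r f := by
    intro w hw f hfE hfe
    have hmem := hw f hfE
    rw [hrB f ⟨hfE, fun hh => hfe (mem_singleton_iff.1 hh)⟩] at hmem
    exact mem_singleton_iff.1 hmem
  have hwe_mem : ∀ w, Realization M Brev w → w e ∈ A e := fun w hw => hBrevE ▸ hw e he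
  by_cases hA1 : ∃ T, IsMinBasis M wU T ∧ e ∈ T
  · obtain ⟨T, hTU, heT⟩ := hA1
    refine ⟨T, fun w hw => ⟨hTU.1, fun B hB => ?_⟩⟩
    have hTfin : T.Finite := hE.subset hTU.1.subset_ground
    have hBfin : B.Finite := hE.subset hB.subset_ground
    have hwT : setWeight w T = setWeight wU T + (w e - sSup (A e)) := by
      rw [setWeight_shift (v := wU) hTfin heT (fun f hf hfe => by
        rw [hagree w hw f (hTU.1.subset_ground hf) hfe, hwUne f hfe]), hwUe]
    have hwe_le : w e ≤ sSup (A e) := le_csSup (hA e he).2.2 (hwe_mem w hw)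
    have hTB := hTU.2 B hB
    by_cases heB : e ∈ B
    · have hwB : setWeight w B = setWeight wU B + (w e - sSup (A e)) := by
        rw [setWeight_shift (v := wU) hBfin heB (fun f hf hfe => by
          rw [hagree w hw f (hB.subset_ground hf) hfe, hwUne f hfe]), hwUe]
      rw [hwT, hwB]
      linarith
    · have hwB : setWeight w B = setWeight wU B := by
        refine setWeight_congr (fun f hf => ?_)
        have hfe : f ≠ e := fun hh => heB (hh ▸ hf)
        rw [hagree w hw f (hB.subset_ground hf) hfe, hwUne f hfe]
      rw [hwT, hwB]
      linarith
  by_cases hB1 : ∃ T, IsMinBasis M wL T ∧ e ∉ T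
  · obtain ⟨T, hTL, heT⟩ := hB1
    refine ⟨T, fun w hw => ⟨hTL.1, fun B hB => ?_⟩⟩
    have hTfin : T.Finite := hE.subset hTL.1.subset_ground
    have hBfin : B.Finite := hE.subset hB.subset_ground
    have hwT : setWeight w T = setWeight wL T := by
      refine setWeight_congr (fun f hf => ?_)
      have hfe : f ≠ e := fun hh => heT (hh ▸ hf)
      rw [hagree w hw f (hTL.1.subset_ground hf) hfe, hwLne f hfe]
    have hwe_ge : sInf (A e) ≤ w e := csInf_le (hA e he).2.1 (hwe_mem w hw)
    have hTB := hTL.2 B hB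
    by_cases heB : e ∈ B
    · have hwB : setWeight w B = setWeight wL B + (w e - sInf (A e)) := by
        rw [setWeight_shift (v := wL) hBfin heB (fun f hf hfe => by
          rw [hagree w hw f (hB.subset_ground hf) hfe, hwLne f hfe]), hwLe]
      rw [hwT, hwB]
      linarith
    · have hwB : setWeight w B = setWeight wL B := by
        refine setWeight_congr (fun f hf => ?_)
        have hfe : f ≠ e := fun hh => heB (hh ▸ hf)
        rw [hagree w hw f (hB.subset_ground hf) hfe, hwLne f hfe]
      rw [hwT, hwB]
      linarith
  exfalso
  have hstar : ∀ C', M.IsCircuit' C' → e ∈ C' → ∃ f ∈ C' \ {e}, sInf (A e) < wL f := by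
    by_contra hcon
    push_neg at hcon
    obtain ⟨C', hC', heC', hall⟩ := hcon
    refine hB1 (exists_minBasis_not_mem hE ⟨C', hC', heC', fun f hf => ?_⟩)
    rw [hwLe]
    exact hall f hf
  have hD1ex : ∃ D1, M.IsCircuit' D1 ∧ e ∈ D1 ∧ ∀ f ∈ D1 \ {e}, wU f < sSup (A e) := by
    by_contra hcon
    push_neg at hcon
    refine hA1 (exists_minBasis_mem hE he (fun C' hC' heC' => ?_))
    obtain ⟨f, hf, hwf⟩ := hcon C' hC' heC'
    refine ⟨f, hf, ?_⟩
    rw [hwUe]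
    exact hwf
  obtain ⟨D1, hD1c, heD1, hD1w⟩ := hD1ex
  have hlowE : lowSet M A e ⊆ M.E := fun x hx => hx.1
  have helow : e ∉ lowSet M A e := fun h => h.2.1 rfl
  have hrlow : ∀ f ∈ lowSet M A e, r f ≤ sInf (A e) := fun f hf =>
    low_le hA hf (hrA f ⟨hf.1, fun hh => hf.2.1 (mem_singleton_iff.1 hh)⟩)
  have hrhigh : ∀ f ∈ highSet M A e, sSup (A e) ≤ r f := fun f hf =>
    high_ge hA hf (hrA f ⟨hf.1, fun hh => hf.2.1 (mem_singleton_iff.1 hh)⟩)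
  have hD1high : ∀ f ∈ D1 \ {e}, f ∉ highSet M A e := by
    intro f hf hfh
    have hlt := hD1w f hf
    rw [hwUne f (fun hh => hf.2 (mem_singleton_iff.2 hh))] at hlt
    exact absurd (hrhigh f hfh) (not_le.2 hlt)
  have hecl : e ∈ M.closure (((D1 \ {e}) \ lowSet M A e) ∪ lowSet M A e) := by
    refine M.closure_subset_closure (fun x hx => ?_)
      (circuit_mem_closure_diff_singleton hD1c heD1)
    by_cases hxl : x ∈ lowSet M A e
    · exact Or.inr hxl
    · exact Or.inl ⟨hx, hxl⟩
  obtain ⟨C1, hC1, heC1, hC1ss⟩ := con_closure_circuit hE hlowE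
    (show (D1 \ {e}) \ lowSet M A e ⊆ M.E \ lowSet M A e from
      fun x hx => ⟨circuit_subset_ground hD1c hx.1.1, hx.2⟩)
    he helow (fun hh => hh.1.2 rfl) hecl
  obtain ⟨D2, hD2, hD2low, hC1D2⟩ := con_circuit_lift hE hlowE hC1
  obtain ⟨f, hf, hwf⟩ := hstar D2 hD2 (hC1D2 heC1)
  have hfe : f ≠ e := fun hh => hf.2 (mem_singleton_iff.2 hh)
  rw [hwLne f hfe] at hwf
  have hflow : f ∉ lowSet M A e := fun hl => absurd (hrlow f hl) (not_le.2 hwf)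
  have hfC1 : f ∈ C1 := hD2low ▸ ⟨hf.1, hflow⟩
  have hfD1 : f ∈ D1 \ {e} := by
    rcases hC1ss hfC1 with h | h
    · exact absurd (mem_singleton_iff.1 h) hfe
    · exact h.1
  have hfU : r f < sSup (A e) := by
    have hlt := hD1w f hfD1
    rwa [hwUne f hfe] at hlt
  have hfE : f ∈ M.E := circuit_subset_ground hD2 hf.1
  have hfmid : f ∈ midSet M A e :=
    ⟨hfE, hfe, r f, hrA f ⟨hfE, fun hh => hfe (mem_singleton_iff.1 hh)⟩, hwf, hfU⟩
  refine hno ⟨C1, ?_, heC1, ⟨f, hfC1, hfmid⟩⟩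
  rw [minorAt]
  refine del_circuit_of hC1 (fun x hx => ⟨(circuit_dep hC1).subset_ground hx, ?_⟩)
  rcases hC1ss hx with h | h
  · rw [mem_singleton_iff.1 h]
    exact fun hxh => hxh.2.1 rfl
  · exact hD1high x h.1

end UncertainCore
/-- Characterization of the core via circuits of `M'_e` meeting `mid(e)`. -/
theorem mem_core_iff (M : Matroid α) (A : α → Set ℝ)
    (hE : M.E.Finite) (hA : IsAreaFun M A)
    (e : α) (he : e ∈ M.E) (hu : ¬ Certain A e) :
    e ∈ core M A ↔
      ∃ C, (minorAt M A e).IsCircuit' C ∧ e ∈ C ∧ (C ∩ midSet M A e).Nonempty := by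
  constructor
  · intro hcore
    by_contra hno
    obtain ⟨x, hx⟩ := hcore _ (UncertainCore.feasible_compl M A hE hA e he hno)
    exact hx.2.2 hx.1
  · rintro ⟨C, hC, heC, hmid⟩
    exact UncertainCore.core_of_circuit M A hE hA e he hu C hC heC hmid
end
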